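/- arXiv:2505.08722 — 9 statements merged into one kernel-verified Lean document; each statement's English description precedes it below -/
import Mathlib

section
/- Let I be a monomial ideal in S = k[x1,...,xn] with minimal monomial generators m1,...,mq. If for each i there is a variable x_{j_i} and a positive integer n_i such that x_{j_i}^{n_i} divides m_i but x_{j_i}^{n_i} does not divide m_j for any j ≠ i, then the LCM lattice of I is isomorphic to the Boolean lattice on q elements. -/
/-- Monomials in `k[x_1,…,x_n]` are identified with exponent vectors `Fin n → ℕ`;
divisibility is the pointwise order, and lcm is the pointwise sup.  The LCM lattice of
the monomial ideal with minimal generators `m 0, …, m (q-1)` is the set of sups of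
subsets of the generators (the empty sup being `0`, i.e. the monomial `1`), ordered by
divisibility. -/
theorem boolean_lcm_lattice (n q : ℕ) (m : Fin q → Fin n → ℕ)
    (hmin : ∀ i j : Fin q, i ≠ j → ¬ m i ≤ m j)
    (hvar : ∀ i : Fin q, ∃ j : Fin n, ∃ ni : ℕ, 0 < ni ∧ ni ≤ m i j ∧
      ∀ i' : Fin q, i' ≠ i → ¬ ni ≤ m i' j) :
    Nonempty ({f : Fin n → ℕ // ∃ A : Finset (Fin q), f = A.sup m} ≃o Finset (Fin q)) := by
  classical
  -- key lemma: membership is detected by divisibility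
  have key : ∀ (A : Finset (Fin q)) (i : Fin q), m i ≤ A.sup m ↔ i ∈ A := by
    intro A i
    constructor
    · intro hle
      obtain ⟨j, ni, hpos, hij, hno⟩ := hvar i
      have h1 : ni ≤ (A.sup m) j := le_trans hij (hle j)
      have h2 : (A.sup m) j = A.sup (fun a => m a j) := by
        simp [Finset.sup_apply]
      rw [h2, Finset.le_sup_iff hpos] at h1
      obtain ⟨a, ha, hni⟩ := h1
      by_cases hai : a = i
      · exact hai ▸ ha
      · exact absurd hni (hno a hai)
    · intro hi
      exact Finset.le_sup hi
  refine ⟨{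
    toFun := fun f => Finset.univ.filter (fun i => m i ≤ f.1)
    invFun := fun A => ⟨A.sup m, A, rfl⟩
    left_inv := by
      rintro ⟨f, A, rfl⟩
      apply Subtype.ext
      have hA : Finset.univ.filter (fun i => m i ≤ A.sup m) = A := by
        ext i; simp [key A i]
      show (Finset.univ.filter (fun i => m i ≤ A.sup m)).sup m = A.sup m
      rw [hA]
    right_inv := by
      intro A
      ext i
      simp [key A i]
    map_rel_iff' := by
      rintro ⟨f, A, rfl⟩ ⟨g, B, rfl⟩
      simp only [Equiv.coe_fn_mk, Finset.le_iff_subset, Finset.subset_iff,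
        Finset.mem_filter, Finset.mem_univ, true_and]
      constructor
      · intro h
        refine Finset.sup_le fun a ha => h (Finset.le_sup ha)
      · intro h i hi
        exact le_trans hi h }⟩
end

section
/- Let G be a finite simple connected graph with at least one edge. If the LCM lattice of the edge ideal I(G) is graded, then the complement graph G^c contains no induced 4-cycle (equivalently, G is gap-free: G has no induced subgraph consisting of two disjoint edges). -/
set_option maxHeartbeats 1000000


/-- A finset of vertices is a union of edges of `G` (i.e. corresponds to an induced
subgraph without isolated vertices) if every vertex in it has a neighbor in it. -/
def IsUnionOfEdges {V : Type*} (G : SimpleGraph V) (S : Finset V) : Prop :=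
  ∀ v ∈ S, ∃ w ∈ S, G.Adj v w

/-- The LCM lattice of the edge ideal `I(G)`: its elements correspond to unions of
edges of `G`, ordered by inclusion. -/
abbrev EdgeLcmLattice {V : Type*} (G : SimpleGraph V) : Type _ :=
  {S : Finset V // IsUnionOfEdges G S}

/-- A finite lattice is graded if there is an order-preserving `ρ` increasing by
exactly 1 along covers. -/
def IsGradedOrder (L : Type*) [Preorder L] : Prop :=
  ∃ ρ : L → ℤ, (∀ x y : L, x < y → ρ x < ρ y) ∧ ∀ x y : L, x ⋖ y → ρ y = ρ x + 1

/-- `G` is gap-free: no induced subgraph consisting of two disjoint edges. -/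
def GapFree {V : Type*} (G : SimpleGraph V) : Prop :=
  ¬ ∃ a b c d : V, G.Adj a b ∧ G.Adj c d ∧ a ≠ c ∧ a ≠ d ∧ b ≠ c ∧ b ≠ d ∧
    ¬ G.Adj a c ∧ ¬ G.Adj a d ∧ ¬ G.Adj b c ∧ ¬ G.Adj b d

section Aux
variable {V : Type*} [DecidableEq V] (G : SimpleGraph V)

lemma lcm_lt_iff (x y : EdgeLcmLattice G) : x < y ↔ x.val ⊂ y.val := by
  rw [← Subtype.coe_lt_coe, Finset.lt_iff_ssubset]

lemma no_singleton (z : EdgeLcmLattice G) : z.val.card ≠ 1 := by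
  intro h1
  rw [Finset.card_eq_one] at h1
  obtain ⟨v, hv⟩ := h1
  obtain ⟨w, hw, hvw⟩ := z.2 v (by rw [hv]; simp)
  rw [hv, Finset.mem_singleton] at hw
  subst hw
  exact G.irrefl hvw

lemma cov_of_card (x y : EdgeLcmLattice G) (h : x.val ⊂ y.val)
    (hc : y.val.card = x.val.card + 1) : x ⋖ y := by
  refine ⟨(lcm_lt_iff G x y).mpr h, fun z h1 h2 => ?_⟩
  have c1 := Finset.card_lt_card ((lcm_lt_iff G x z).mp h1)
  have c2 := Finset.card_lt_card ((lcm_lt_iff G z y).mp h2)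
  omega

lemma cov_bot (hO : IsUnionOfEdges G ∅) (y : EdgeLcmLattice G)
    (hc : y.val.card = 2) : (⟨∅, hO⟩ : EdgeLcmLattice G) ⋖ y := by
  refine ⟨(lcm_lt_iff G _ y).mpr ?_, fun z h1 h2 => ?_⟩
  · refine Finset.empty_ssubset.mpr (Finset.card_pos.mp ?_); omega
  · have c1 := Finset.card_lt_card ((lcm_lt_iff G _ z).mp h1)
    have c2 := Finset.card_lt_card ((lcm_lt_iff G z y).mp h2)
    simp only [Finset.card_empty] at c1
    exact no_singleton G z (by omega)

end Aux

section Key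
variable {V : Type*} [DecidableEq V] {G : SimpleGraph V}

lemma key (hgr : IsGradedOrder (EdgeLcmLattice G)) {a b c d e : V}
    (hab : G.Adj a b) (hcd : G.Adj c d)
    (hac : a ≠ c) (had : a ≠ d) (hbc : b ≠ c) (hbd : b ≠ d)
    (nac : ¬ G.Adj a c) (nad : ¬ G.Adj a d) (nbc : ¬ G.Adj b c) (nbd : ¬ G.Adj b d)
    (hae : G.Adj a e) (hec : G.Adj e c) (heb : e ≠ b) (hed : e ≠ d) : False := by
  have hAB := hab.ne
  have hCD := hcd.ne
  have hAE := hae.ne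
  have hEC := hec.ne
  -- validity proofs
  have vO : IsUnionOfEdges G (∅ : Finset V) := by intro v hv; simp at hv
  have vAB : IsUnionOfEdges G {a, b} := by
    intro v hv; simp only [Finset.mem_insert, Finset.mem_singleton] at hv
    rcases hv with rfl | rfl
    · exact ⟨b, by simp, hab⟩
    · exact ⟨a, by simp, hab.symm⟩
  have vEC : IsUnionOfEdges G {e, c} := by
    intro v hv; simp only [Finset.mem_insert, Finset.mem_singleton] at hv
    rcases hv with rfl | rfl
    · exact ⟨c, by simp, hec⟩
    · exact ⟨e, by simp, hec.symm⟩
  have vAEC : IsUnionOfEdges G {a, e, c} := by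
    intro v hv; simp only [Finset.mem_insert, Finset.mem_singleton] at hv
    rcases hv with rfl | rfl | rfl
    · exact ⟨e, by simp, hae⟩
    · exact ⟨a, by simp, hae.symm⟩
    · exact ⟨e, by simp, hec.symm⟩
  have vW : IsUnionOfEdges G {a, b, c, d} := by
    intro v hv; simp only [Finset.mem_insert, Finset.mem_singleton] at hv
    rcases hv with rfl | rfl | rfl | rfl
    · exact ⟨b, by simp, hab⟩
    · exact ⟨a, by simp, hab.symm⟩
    · exact ⟨d, by simp, hcd⟩
    · exact ⟨c, by simp, hcd.symm⟩
  have vX : IsUnionOfEdges G {a, e, c, d} := by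
    intro v hv; simp only [Finset.mem_insert, Finset.mem_singleton] at hv
    rcases hv with rfl | rfl | rfl | rfl
    · exact ⟨e, by simp, hae⟩
    · exact ⟨a, by simp, hae.symm⟩
    · exact ⟨d, by simp, hcd⟩
    · exact ⟨c, by simp, hcd.symm⟩
  have vY : IsUnionOfEdges G {a, b, c, d, e} := by
    intro v hv; simp only [Finset.mem_insert, Finset.mem_singleton] at hv
    rcases hv with rfl | rfl | rfl | rfl | rfl
    · exact ⟨b, by simp, hab⟩
    · exact ⟨a, by simp, hab.symm⟩
    · exact ⟨d, by simp, hcd⟩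
    · exact ⟨c, by simp, hcd.symm⟩
    · exact ⟨a, by simp, hae.symm⟩
  set O : EdgeLcmLattice G := ⟨∅, vO⟩ with hO
  set AB : EdgeLcmLattice G := ⟨{a, b}, vAB⟩ with hABdef
  set EC : EdgeLcmLattice G := ⟨{e, c}, vEC⟩ with hECdef
  set AEC : EdgeLcmLattice G := ⟨{a, e, c}, vAEC⟩ with hAECdef
  set W : EdgeLcmLattice G := ⟨{a, b, c, d}, vW⟩ with hWdef
  set X : EdgeLcmLattice G := ⟨{a, e, c, d}, vX⟩ with hXdef
  set Y : EdgeLcmLattice G := ⟨{a, b, c, d, e}, vY⟩ with hYdef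
  -- cardinalities
  have cAB : ({a, b} : Finset V).card = 2 := by
    rw [Finset.card_insert_of_notMem (by simp [hAB]), Finset.card_singleton]
  have cEC : ({e, c} : Finset V).card = 2 := by
    rw [Finset.card_insert_of_notMem (by simp [hEC]), Finset.card_singleton]
  have cAEC : ({a, e, c} : Finset V).card = 3 := by
    rw [Finset.card_insert_of_notMem (by simp [hAE, hac]),
      Finset.card_insert_of_notMem (by simp [hEC]), Finset.card_singleton]
  have cW : ({a, b, c, d} : Finset V).card = 4 := by
    rw [Finset.card_insert_of_notMem (by simp [hAB, hac, had]),
      Finset.card_insert_of_notMem (by simp [hbc, hbd]),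
      Finset.card_insert_of_notMem (by simp [hCD]), Finset.card_singleton]
  have cX : ({a, e, c, d} : Finset V).card = 4 := by
    rw [Finset.card_insert_of_notMem (by simp [hAE, hac, had]),
      Finset.card_insert_of_notMem (by simp [hEC, hed]),
      Finset.card_insert_of_notMem (by simp [hCD]), Finset.card_singleton]
  have cY : ({a, b, c, d, e} : Finset V).card = 5 := by
    rw [Finset.card_insert_of_notMem (by simp [hAB, hac, had, hAE]),
      Finset.card_insert_of_notMem (by simp [hbc, hbd, Ne.symm heb]),
      Finset.card_insert_of_notMem (by simp [hCD, Ne.symm hEC]),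
      Finset.card_insert_of_notMem (by simp [Ne.symm hed]), Finset.card_singleton]
  -- subset relations
  have sABW : ({a, b} : Finset V) ⊂ {a, b, c, d} := by
    rw [Finset.ssubset_def]
    refine ⟨fun v hv => ?_, fun h => ?_⟩
    · simp only [Finset.mem_insert, Finset.mem_singleton] at hv ⊢; tauto
    · have := Finset.card_le_card h; omega
  have sECAEC : ({e, c} : Finset V) ⊂ {a, e, c} := by
    rw [Finset.ssubset_def]
    refine ⟨fun v hv => ?_, fun h => ?_⟩
    · simp only [Finset.mem_insert, Finset.mem_singleton] at hv ⊢; tauto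
    · have := Finset.card_le_card h; omega
  have sAECX : ({a, e, c} : Finset V) ⊂ {a, e, c, d} := by
    rw [Finset.ssubset_def]
    refine ⟨fun v hv => ?_, fun h => ?_⟩
    · simp only [Finset.mem_insert, Finset.mem_singleton] at hv ⊢; tauto
    · have := Finset.card_le_card h; omega
  have sWY : ({a, b, c, d} : Finset V) ⊂ {a, b, c, d, e} := by
    rw [Finset.ssubset_def]
    refine ⟨fun v hv => ?_, fun h => ?_⟩
    · simp only [Finset.mem_insert, Finset.mem_singleton] at hv ⊢; tauto
    · have := Finset.card_le_card h; omega
  have sXY : ({a, e, c, d} : Finset V) ⊂ {a, b, c, d, e} := by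
    rw [Finset.ssubset_def]
    refine ⟨fun v hv => ?_, fun h => ?_⟩
    · simp only [Finset.mem_insert, Finset.mem_singleton] at hv ⊢; tauto
    · have := Finset.card_le_card h; omega
  -- covers
  have h1 : O ⋖ AB := cov_bot G vO AB cAB
  have h2 : O ⋖ EC := cov_bot G vO EC cEC
  have h4 : EC ⋖ AEC := cov_of_card G EC AEC sECAEC (by rw [hAECdef, hECdef]; simp [cAEC, cEC])
  have h5 : AEC ⋖ X := cov_of_card G AEC X sAECX (by rw [hAECdef, hXdef]; simp [cAEC, cX])
  have h6 : W ⋖ Y := cov_of_card G W Y sWY (by rw [hWdef, hYdef]; simp [cW, cY])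
  have h7 : X ⋖ Y := cov_of_card G X Y sXY (by rw [hXdef, hYdef]; simp [cX, cY])
  have h3 : AB ⋖ W := by
    refine ⟨(lcm_lt_iff G AB W).mpr sABW, fun z hz1 hz2 => ?_⟩
    have hz1' : ({a, b} : Finset V) ⊂ z.val := (lcm_lt_iff G AB z).mp hz1
    have hz2' : z.val ⊂ ({a, b, c, d} : Finset V) := (lcm_lt_iff G z W).mp hz2
    have hWsub : ∀ {u : V}, u ∈ z.val → u = a ∨ u = b ∨ u = c ∨ u = d := by
      intro u hu
      have := hz2'.1 hu
      simpa using this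
    -- if c and d both in z, z = W, contradiction
    have hcd_not : ¬ (c ∈ z.val ∧ d ∈ z.val) := by
      rintro ⟨hc', hd'⟩
      apply hz2'.2
      intro u hu
      simp only [Finset.mem_insert, Finset.mem_singleton] at hu
      rcases hu with rfl | rfl | rfl | rfl
      · exact hz1'.1 (by simp)
      · exact hz1'.1 (by simp)
      · exact hc'
      · exact hd'
    -- z contains c or d
    obtain ⟨u, hu, hunab⟩ := Finset.exists_of_ssubset hz1'
    have hucd : u = c ∨ u = d := by
      rcases hWsub hu with rfl | rfl | rfl | rfl
      · exact absurd (by simp) hunab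
      · exact absurd (by simp) hunab
      · exact Or.inl rfl
      · exact Or.inr rfl
    rcases hucd with rfl | rfl
    · obtain ⟨w, hw, hadj⟩ := z.2 u hu
      rcases hWsub hw with rfl | rfl | rfl | rfl
      · exact nac hadj.symm
      · exact nbc hadj.symm
      · exact G.irrefl hadj
      · exact hcd_not ⟨hu, hw⟩
    · obtain ⟨w, hw, hadj⟩ := z.2 u hu
      rcases hWsub hw with rfl | rfl | rfl | rfl
      · exact nad hadj.symm
      · exact nbd hadj.symm
      · exact hcd_not ⟨hw, hu⟩
      · exact G.irrefl hadj
  obtain ⟨ρ, _, hstep⟩ := hgr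
  have e1 := hstep _ _ h1
  have e2 := hstep _ _ h2
  have e3 := hstep _ _ h3
  have e4 := hstep _ _ h4
  have e5 := hstep _ _ h5
  have e6 := hstep _ _ h6
  have e7 := hstep _ _ h7
  omega

lemma no_gap_walk (hgr : IsGradedOrder (EdgeLcmLattice G)) (d : V) :
    ∀ {a c : V}, G.Walk a c → ∀ b : V, G.Adj a b → G.Adj c d → a ≠ c → a ≠ d → b ≠ c → b ≠ d →
      ¬ G.Adj a c → ¬ G.Adj a d → ¬ G.Adj b c → ¬ G.Adj b d → False := by
  intro a c w
  induction w with
  | nil =>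
    intro b _ _ hac _ _ _ _ _ _ _
    exact hac rfl
  | cons h p ih =>
    rename_i a' e c'
    intro b hab hcd hac had hbc hbd nac nad nbc nbd
    by_cases heb : e = b
    · subst heb
      exact ih a' hab.symm hcd hbc hbd hac had nbc nbd nac nad
    · by_cases hec : e = c'
      · exact nac (hec ▸ h)
      · by_cases hed : e = d
        · exact nad (hed ▸ h)
        · by_cases hEc : G.Adj e c'
          · exact key hgr hab hcd hac had hbc hbd nac nad nbc nbd h hEc heb hed
          · by_cases hEd : G.Adj e d
            · exact key hgr hab hcd.symm had hac hbd hbc nad nac nbd nbc h hEd heb hec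
            · exact ih a' h.symm hcd hec hed hac had hEc hEd nac nad

end Key

theorem graded_lcm_lattice_implies_gapFree {V : Type*} [Fintype V]
    (G : SimpleGraph V) (hconn : G.Connected) (hnt : ∃ a b : V, G.Adj a b)
    (hgraded : IsGradedOrder (EdgeLcmLattice G)) : GapFree G := by
  classical
  rintro ⟨a, b, c, d, hab, hcd, hac, had, hbc, hbd, nac, nad, nbc, nbd⟩
  obtain ⟨w⟩ := hconn.preconnected a c
  exact no_gap_walk hgraded d w b hab hcd hac had hbc hbd nac nad nbc nbd
end

section
/- Let G be a finite simple connected nontrivial graph. The LCM lattice of the edge ideal I(G) is upper semimodular if and only if G has no two disjoint edges, if and only if G is isomorphic to the 3-cycle C3 or a star graph St_n for some n ≥ 2. -/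
/-- The largest union-of-edges subset of a set `X` of vertices: the meet of elements
`x, y` of the LCM lattice is `core G (x ∩ y)`. -/
def core {V : Type*} [DecidableEq V] (G : SimpleGraph V) [DecidableRel G.Adj]
    (X : Finset V) : Finset V :=
  X.filter fun v => ∃ w ∈ X, G.Adj v w

/-- The LCM lattice of `I(G)` is (graded and) upper semimodular:
`rk x + rk y ≥ rk (x ⊓ y) + rk (x ⊔ y)`, where the join of `x` and `y` is `x ∪ y` and
the meet is `core G (x ∩ y)`. -/
def IsUpperSemimodularEdgeLattice {V : Type*} [DecidableEq V] (G : SimpleGraph V)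
    [DecidableRel G.Adj] : Prop :=
  ∃ ρ : EdgeLcmLattice G → ℤ,
    (∀ x y : EdgeLcmLattice G, x < y → ρ x < ρ y) ∧
    (∀ x y : EdgeLcmLattice G, x ⋖ y → ρ y = ρ x + 1) ∧
    (∀ x y z w : EdgeLcmLattice G,
      (z : Finset V) = core G ((x : Finset V) ∩ (y : Finset V)) →
      (w : Finset V) = (x : Finset V) ∪ (y : Finset V) →
      ρ z + ρ w ≤ ρ x + ρ y)

/-- The star graph on `n` vertices: vertex `0` is joined to all other vertices. -/
def starGraph (n : ℕ) : SimpleGraph (Fin n) :=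
  SimpleGraph.fromRel fun a _ => (a : ℕ) = 0

section Aux

variable {V : Type*} [DecidableEq V] {G : SimpleGraph V} [DecidableRel G.Adj]

lemma isUnionOfEdges_empty : IsUnionOfEdges G (∅ : Finset V) := by
  intro v hv
  simp at hv

lemma isUnionOfEdges_pair {a b : V} (h : G.Adj a b) : IsUnionOfEdges G {a, b} := by
  intro v hv
  simp only [Finset.mem_insert, Finset.mem_singleton] at hv
  rcases hv with rfl | rfl
  · exact ⟨b, by simp, h⟩
  · exact ⟨a, by simp, h.symm⟩

lemma exists_edge_of_nonempty {S : Finset V} (hS : IsUnionOfEdges G S)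
    (hne : S.Nonempty) : ∃ a ∈ S, ∃ b ∈ S, G.Adj a b := by
  obtain ⟨v, hv⟩ := hne
  obtain ⟨w, hw, hvw⟩ := hS v hv
  exact ⟨v, hv, w, hw, hvw⟩

lemma two_le_card_of_isUnionOfEdges {S : Finset V} (hS : IsUnionOfEdges G S)
    (hne : S.Nonempty) : 2 ≤ S.card := by
  obtain ⟨a, ha, b, hb, hab⟩ := exists_edge_of_nonempty hS hne
  exact Finset.one_lt_card.mpr ⟨a, ha, b, hb, hab.ne⟩

/-- One step along a geodesic. -/
lemma exists_step {b c : V} (hr : G.Reachable b c) (hne : b ≠ c) :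
    ∃ v, G.Adj b v ∧ G.dist v c < G.dist b c := by
  obtain ⟨p, hp⟩ := hr.exists_walk_length_eq_dist
  cases p with
  | nil => exact absurd rfl hne
  | cons h q =>
    refine ⟨_, h, ?_⟩
    have h1 := SimpleGraph.dist_le q
    rw [SimpleGraph.Walk.length_cons] at hp
    omega

lemma exists_neighbor {x y : V} (hr : G.Reachable x y) (hne : x ≠ y) :
    ∃ w, G.Adj x w := by
  obtain ⟨v, h, -⟩ := exists_step hr hne
  exact ⟨v, h⟩

/-- A connected graph with two disjoint edges contains a path on 4 vertices. -/
lemma exists_P4 (hconn : G.Connected)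
    (h : ∃ a b c d : V, G.Adj a b ∧ G.Adj c d ∧ a ≠ c ∧ a ≠ d ∧ b ≠ c ∧ b ≠ d) :
    ∃ a b c d : V, G.Adj a b ∧ G.Adj b c ∧ G.Adj c d ∧ a ≠ c ∧ a ≠ d ∧ b ≠ d := by
  obtain ⟨a, b, c, d, hab, hcd, hac, had, hbc, hbd⟩ := h
  suffices H : ∀ n : ℕ, ∀ a b c d : V, G.Adj a b → G.Adj c d → a ≠ c → a ≠ d → b ≠ c → b ≠ d →
      G.dist b c = n →
      ∃ a b c d : V, G.Adj a b ∧ G.Adj b c ∧ G.Adj c d ∧ a ≠ c ∧ a ≠ d ∧ b ≠ d by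
    exact H _ a b c d hab hcd hac had hbc hbd rfl
  intro n
  induction n using Nat.strong_induction_on with
  | _ n ih =>
  intro a b c d hab hcd hac had hbc hbd hdist
  by_cases hadjbc : G.Adj b c
  · exact ⟨a, b, c, d, hab, hadjbc, hcd, hac, had, hbd⟩
  obtain ⟨v1, hbv1, hlt⟩ := exists_step (hconn b c) hbc
  rw [hdist] at hlt
  have hv1c : v1 ≠ c := fun h' => hadjbc (h' ▸ hbv1)
  by_cases hv1d : v1 = d
  · subst hv1d
    exact ⟨a, b, v1, c, hab, hbv1, hcd.symm, had, hac, hbc⟩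
  by_cases hv1a : v1 = a
  · subst hv1a
    exact ih _ hlt b v1 c d hab.symm hcd hbc hbd hac had rfl
  · exact ih _ hlt b v1 c d hbv1 hcd hbc hbd hv1c hv1d rfl

lemma bot_covby_edge {a b : V} (hab : G.Adj a b) :
    (⟨∅, isUnionOfEdges_empty⟩ : EdgeLcmLattice G) ⋖ ⟨{a, b}, isUnionOfEdges_pair hab⟩ := by
  constructor
  · rw [Subtype.mk_lt_mk, Finset.lt_iff_ssubset, Finset.empty_ssubset]
    exact ⟨a, by simp⟩
  · rintro ⟨m, hm⟩ h1 h2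
    rw [Subtype.mk_lt_mk, Finset.lt_iff_ssubset] at h1 h2
    have hmne : m.Nonempty := Finset.empty_ssubset.mp h1
    have h2card : 2 ≤ m.card := two_le_card_of_isUnionOfEdges hm hmne
    have : m = {a, b} :=
      Finset.eq_of_subset_of_card_le h2.subset (by rw [Finset.card_pair hab.ne]; omega)
    exact h2.ne this

lemma not_usm_of_P4 {a b c d : V} (hab : G.Adj a b) (hbc : G.Adj b c) (hcd : G.Adj c d)
    (hac : a ≠ c) (had : a ≠ d) (hbd : b ≠ d) :
    ¬ IsUpperSemimodularEdgeLattice G := by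
  rintro ⟨ρ, hmono, hcov, hsm⟩
  have hBC : b ≠ c := hbc.ne
  have hCD : c ≠ d := hcd.ne
  have ht3 : IsUnionOfEdges G {a, b, c} := by
    intro v hv
    simp only [Finset.mem_insert, Finset.mem_singleton] at hv
    rcases hv with rfl | rfl | rfl
    · exact ⟨b, by simp, hab⟩
    · exact ⟨a, by simp, hab.symm⟩
    · exact ⟨b, by simp, hbc.symm⟩
  have ht4 : IsUnionOfEdges G {a, b, c, d} := by
    intro v hv
    simp only [Finset.mem_insert, Finset.mem_singleton] at hv
    rcases hv with rfl | rfl | rfl | rfl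
    · exact ⟨b, by simp, hab⟩
    · exact ⟨a, by simp, hab.symm⟩
    · exact ⟨d, by simp, hcd⟩
    · exact ⟨c, by simp, hcd.symm⟩
  set z0 : EdgeLcmLattice G := ⟨∅, isUnionOfEdges_empty⟩ with hz0def
  set e1 : EdgeLcmLattice G := ⟨{a, b}, isUnionOfEdges_pair hab⟩ with he1def
  set e2 : EdgeLcmLattice G := ⟨{c, d}, isUnionOfEdges_pair hcd⟩ with he2def
  set t3 : EdgeLcmLattice G := ⟨{a, b, c}, ht3⟩ with ht3def
  set t4 : EdgeLcmLattice G := ⟨{a, b, c, d}, ht4⟩ with ht4def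
  have h1 : ρ e1 = ρ z0 + 1 := hcov z0 e1 (bot_covby_edge hab)
  have h2 : ρ e2 = ρ z0 + 1 := hcov z0 e2 (bot_covby_edge hcd)
  have hss13 : ({a, b} : Finset V) ⊂ {a, b, c} := by
    refine Finset.ssubset_iff_subset_ne.mpr ⟨?_, ?_⟩
    · intro v hv
      simp only [Finset.mem_insert, Finset.mem_singleton] at hv ⊢
      tauto
    · intro h
      have hc : c ∈ ({a, b} : Finset V) := by rw [h]; simp
      simp only [Finset.mem_insert, Finset.mem_singleton] at hc
      rcases hc with h' | h'
      · exact hac h'.symm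
      · exact hBC h'.symm
  have hss34 : ({a, b, c} : Finset V) ⊂ {a, b, c, d} := by
    refine Finset.ssubset_iff_subset_ne.mpr ⟨?_, ?_⟩
    · intro v hv
      simp only [Finset.mem_insert, Finset.mem_singleton] at hv ⊢
      tauto
    · intro h
      have hd : d ∈ ({a, b, c} : Finset V) := by rw [h]; simp
      simp only [Finset.mem_insert, Finset.mem_singleton] at hd
      rcases hd with h' | h' | h'
      · exact had h'.symm
      · exact hbd h'.symm
      · exact hCD h'.symm
  have h3 : ρ e1 < ρ t3 :=
    hmono e1 t3 (Subtype.mk_lt_mk.mpr (Finset.lt_iff_ssubset.mpr hss13))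
  have h4 : ρ t3 < ρ t4 :=
    hmono t3 t4 (Subtype.mk_lt_mk.mpr (Finset.lt_iff_ssubset.mpr hss34))
  have hinter : ({a, b} : Finset V) ∩ {c, d} = ∅ := by
    rw [Finset.eq_empty_iff_forall_notMem]
    intro v hv
    simp only [Finset.mem_inter, Finset.mem_insert, Finset.mem_singleton] at hv
    obtain ⟨h | h, h' | h'⟩ := hv <;> subst h <;> subst h' <;> simp_all
  have h5 : ρ z0 + ρ t4 ≤ ρ e1 + ρ e2 := by
    refine hsm e1 e2 z0 t4 ?_ ?_
    · show (∅ : Finset V) = core G (({a, b} : Finset V) ∩ {c, d})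
      rw [hinter]
      simp [core]
    · show ({a, b, c, d} : Finset V) = ({a, b} : Finset V) ∪ {c, d}
      ext v
      simp only [Finset.mem_insert, Finset.mem_singleton, Finset.mem_union]
      tauto
  omega

lemma usm_of_no_disjoint
    (hnd : ¬ ∃ a b c d : V, G.Adj a b ∧ G.Adj c d ∧ a ≠ c ∧ a ≠ d ∧ b ≠ c ∧ b ≠ d) :
    IsUpperSemimodularEdgeLattice G := by
  have hshare : ∀ a b c d : V, G.Adj a b → G.Adj c d → a = c ∨ a = d ∨ b = c ∨ b = d := by
    intro a b c d hab hcd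
    by_contra h
    push_neg at h
    exact hnd ⟨a, b, c, d, hab, hcd, h.1, h.2.1, h.2.2.1, h.2.2.2⟩
  have hint : ∀ (S T : Finset V), IsUnionOfEdges G S → IsUnionOfEdges G T →
      S.Nonempty → T.Nonempty → (S ∩ T).Nonempty := by
    intro S T hS hT hSne hTne
    obtain ⟨a, ha, b, hb, hab⟩ := exists_edge_of_nonempty hS hSne
    obtain ⟨c, hc, d, hd, hcd⟩ := exists_edge_of_nonempty hT hTne
    rcases hshare a b c d hab hcd with rfl | rfl | rfl | rfl
    · exact ⟨a, Finset.mem_inter.mpr ⟨ha, hc⟩⟩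
    · exact ⟨a, Finset.mem_inter.mpr ⟨ha, hd⟩⟩
    · exact ⟨b, Finset.mem_inter.mpr ⟨hb, hc⟩⟩
    · exact ⟨b, Finset.mem_inter.mpr ⟨hb, hd⟩⟩
  refine ⟨fun x => if x.1 = ∅ then 0 else (x.1.card : ℤ) - 1, ?_, ?_, ?_⟩
  · -- strictly monotone
    intro x y hxy
    dsimp only
    have hss : x.1 ⊂ y.1 := Finset.lt_iff_ssubset.mp (Subtype.coe_lt_coe.mpr hxy)
    obtain ⟨v, hvy, hvx⟩ := Finset.exists_of_ssubset hss
    have hyne : y.1 ≠ ∅ := fun h => by simp [h] at hvy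
    have hy2 : 2 ≤ y.1.card :=
      two_le_card_of_isUnionOfEdges y.2 (Finset.nonempty_iff_ne_empty.mpr hyne)
    by_cases hx : x.1 = ∅
    · rw [if_pos hx, if_neg hyne]
      omega
    · rw [if_neg hx, if_neg hyne]
      have := Finset.card_lt_card hss
      omega
  · -- covers
    intro x y hc
    dsimp only
    have hss : x.1 ⊂ y.1 := Finset.lt_iff_ssubset.mp (Subtype.coe_lt_coe.mpr hc.1)
    obtain ⟨v0, hv0y, hv0x⟩ := Finset.exists_of_ssubset hss
    have hyne : y.1 ≠ ∅ := fun h => by simp [h] at hv0y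
    have hynon : y.1.Nonempty := Finset.nonempty_iff_ne_empty.mpr hyne
    by_cases hx : x.1 = ∅
    · -- y is an edge
      obtain ⟨a, ha, b, hb, hab⟩ := exists_edge_of_nonempty y.2 hynon
      have hsub : ({a, b} : Finset V) ⊆ y.1 := by
        intro v hv
        simp only [Finset.mem_insert, Finset.mem_singleton] at hv
        rcases hv with rfl | rfl <;> assumption
      have heq : y.1 = {a, b} := by
        by_contra hne
        have h1' : x < (⟨{a, b}, isUnionOfEdges_pair hab⟩ : EdgeLcmLattice G) := by
          rw [← Subtype.coe_lt_coe]
          show x.1 < ({a, b} : Finset V)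
          rw [Finset.lt_iff_ssubset, hx, Finset.empty_ssubset]
          exact ⟨a, by simp⟩
        have h2' : (⟨{a, b}, isUnionOfEdges_pair hab⟩ : EdgeLcmLattice G) < y := by
          rw [← Subtype.coe_lt_coe]
          show ({a, b} : Finset V) < y.1
          rw [Finset.lt_iff_ssubset]
          exact Finset.ssubset_iff_subset_ne.mpr ⟨hsub, fun h => hne h.symm⟩
        exact hc.2 h1' h2'
      rw [if_neg hyne, if_pos hx, heq, Finset.card_pair hab.ne]
      norm_num
    · -- add one vertex
      have hxnon : x.1.Nonempty := Finset.nonempty_iff_ne_empty.mpr hx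
      have hv : ∃ v ∈ y.1, v ∉ x.1 ∧ ∃ u ∈ x.1, G.Adj v u := by
        by_contra hno
        push_neg at hno
        obtain ⟨w, hwy, hvw⟩ := y.2 v0 hv0y
        have hwx : w ∉ x.1 := fun hwx => (hno v0 hv0y hv0x w hwx) hvw
        obtain ⟨p, hp, q, hq, hpq⟩ := exists_edge_of_nonempty x.2 hxnon
        rcases hshare v0 w p q hvw hpq with rfl | rfl | rfl | rfl
        · exact hv0x hp
        · exact hv0x hq
        · exact hwx hp
        · exact hwx hq
      obtain ⟨v, hvy, hvx, u, hu, hvu⟩ := hv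
      have hm : IsUnionOfEdges G (insert v x.1) := by
        intro s hs
        rcases Finset.mem_insert.mp hs with rfl | hs'
        · exact ⟨u, Finset.mem_insert_of_mem hu, hvu⟩
        · obtain ⟨w, hw, h⟩ := x.2 s hs'
          exact ⟨w, Finset.mem_insert_of_mem hw, h⟩
      have hmy : insert v x.1 ⊆ y.1 := Finset.insert_subset hvy hss.subset
      have heq : insert v x.1 = y.1 := by
        by_contra hne
        have h1' : x < (⟨insert v x.1, hm⟩ : EdgeLcmLattice G) := by
          rw [← Subtype.coe_lt_coe]
          show x.1 < insert v x.1
          rw [Finset.lt_iff_ssubset]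
          exact Finset.ssubset_insert hvx
        have h2' : (⟨insert v x.1, hm⟩ : EdgeLcmLattice G) < y := by
          rw [← Subtype.coe_lt_coe]
          show (insert v x.1 : Finset V) < y.1
          rw [Finset.lt_iff_ssubset]
          exact Finset.ssubset_iff_subset_ne.mpr ⟨hmy, hne⟩
        exact hc.2 h1' h2'
      have hcard : y.1.card = x.1.card + 1 := by
        rw [← heq, Finset.card_insert_of_notMem hvx]
      rw [if_neg hyne, if_neg hx, hcard]
      push_cast
      ring
  · -- semimodularity
    intro x y z w hz hw
    dsimp only
    by_cases hx : x.1 = ∅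
    · have hz' : z.1 = ∅ := by rw [hz, hx]; simp [core]
      have hw' : w.1 = y.1 := by rw [hw, hx]; simp
      simp only [hz', hw', hx]
      simp
    by_cases hy : y.1 = ∅
    · have hz' : z.1 = ∅ := by rw [hz, hy]; simp [core]
      have hw' : w.1 = x.1 := by rw [hw, hy]; simp
      simp only [hz', hw', hy]
      simp
    have hxnon : x.1.Nonempty := Finset.nonempty_iff_ne_empty.mpr hx
    have hynon : y.1.Nonempty := Finset.nonempty_iff_ne_empty.mpr hy
    have hixy : (x.1 ∩ y.1).Nonempty := hint x.1 y.1 x.2 y.2 hxnon hynon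
    have hicard : 1 ≤ (x.1 ∩ y.1).card := Finset.card_pos.mpr hixy
    have hwne : w.1 ≠ ∅ := by
      rw [hw]
      intro h
      obtain ⟨a, ha⟩ := hxnon
      have : a ∈ x.1 ∪ y.1 := Finset.mem_union_left _ ha
      rw [h] at this
      simp at this
    have hcards : (x.1 ∪ y.1).card + (x.1 ∩ y.1).card = x.1.card + y.1.card :=
      Finset.card_union_add_card_inter _ _
    have hzsub : z.1 ⊆ x.1 ∩ y.1 := by rw [hz]; exact Finset.filter_subset _ _
    have hzcard : z.1.card ≤ (x.1 ∩ y.1).card := Finset.card_le_card hzsub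
    have hwcard : w.1.card = (x.1 ∪ y.1).card := by rw [hw]
    rw [if_neg hx, if_neg hy, if_neg hwne, hwcard]
    by_cases hzz : z.1 = ∅
    · rw [if_pos hzz]
      omega
    · rw [if_neg hzz]
      omega

end Aux

theorem usm_iff_no_disjoint_edges_iff_C3_or_star {V : Type*} [Fintype V] [DecidableEq V]
    (G : SimpleGraph V) [DecidableRel G.Adj]
    (hconn : G.Connected) (hnt : ∃ a b : V, G.Adj a b) :
    (IsUpperSemimodularEdgeLattice G ↔
      ¬ ∃ a b c d : V, G.Adj a b ∧ G.Adj c d ∧ a ≠ c ∧ a ≠ d ∧ b ≠ c ∧ b ≠ d) ∧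
    (IsUpperSemimodularEdgeLattice G ↔
      (Nonempty (G ≃g (⊤ : SimpleGraph (Fin 3))) ∨
        ∃ n : ℕ, 2 ≤ n ∧ Nonempty (G ≃g starGraph n))) := by
  have iff1 : IsUpperSemimodularEdgeLattice G ↔
      ¬ ∃ a b c d : V, G.Adj a b ∧ G.Adj c d ∧ a ≠ c ∧ a ≠ d ∧ b ≠ c ∧ b ≠ d := by
    constructor
    · intro h
      by_contra hdisj
      obtain ⟨a, b, c, d, hab, hbc, hcd, hac, had, hbd⟩ := exists_P4 hconn hdisj
      exact not_usm_of_P4 hab hbc hcd hac had hbd h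
    · exact usm_of_no_disjoint
  refine ⟨iff1, iff1.trans ⟨?_, ?_⟩⟩
  · -- no disjoint edges → C3 or star
    intro hnd
    have hshare : ∀ a b c d : V, G.Adj a b → G.Adj c d → a = c ∨ a = d ∨ b = c ∨ b = d := by
      intro a b c d hab hcd
      by_contra h
      push_neg at h
      exact hnd ⟨a, b, c, d, hab, hcd, h.1, h.2.1, h.2.2.1, h.2.2.2⟩
    obtain ⟨u, v, huv⟩ := hnt
    have hstar : ∀ z : V, (∀ a b, G.Adj a b → a = z ∨ b = z) →
        ∃ n : ℕ, 2 ≤ n ∧ Nonempty (G ≃g starGraph n) := by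
      intro z hz
      have hcard : 2 ≤ Fintype.card V :=
        Fintype.one_lt_card_iff_nontrivial.mpr ⟨⟨u, v, huv.ne⟩⟩
      haveI : NeZero (Fintype.card V) := ⟨by omega⟩
      have hzadj : ∀ x : V, x ≠ z → G.Adj z x := by
        intro x hx
        obtain ⟨y, hxy⟩ := exists_neighbor (hconn x z) hx
        rcases hz x y hxy with h | h
        · exact absurd h hx
        · exact (h ▸ hxy).symm
      refine ⟨Fintype.card V, hcard, ⟨?_⟩⟩
      set e0 := Fintype.equivFin V with he0
      set f := e0.trans (Equiv.swap (e0 z) 0) with hf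
      have hfz : f z = 0 := by simp [hf]
      have hkey : ∀ x : V, ((f x : Fin (Fintype.card V)) : ℕ) = 0 ↔ x = z := by
        intro x
        constructor
        · intro h
          have hfx : f x = f z := by
            rw [hfz]
            exact Fin.ext (by simpa using h)
          exact f.injective hfx
        · rintro rfl
          rw [hfz]
          simp
      refine ⟨f, @fun x y => ?_⟩
      simp only [starGraph, SimpleGraph.fromRel_adj]
      constructor
      · rintro ⟨hne, h0 | h0⟩
        · have hx : x = z := (hkey x).mp h0
          subst hx
          exact hzadj y fun hyz => hne (by rw [hyz])
        · have hy : y = z := (hkey y).mp h0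
          subst hy
          exact (hzadj x fun hxz => hne (by rw [hxz])).symm
      · intro hadj
        refine ⟨fun h => hadj.ne (f.injective h), ?_⟩
        rcases hz x y hadj with rfl | rfl
        · exact Or.inl ((hkey _).mpr rfl)
        · exact Or.inr ((hkey _).mpr rfl)
    by_cases hu : ∀ a b, G.Adj a b → a = u ∨ b = u
    · exact Or.inr (hstar u hu)
    by_cases hv' : ∀ a b, G.Adj a b → a = v ∨ b = v
    · exact Or.inr (hstar v hv')
    push_neg at hu hv'
    obtain ⟨p, q, hpq, hpu, hqu⟩ := hu
    obtain ⟨r, s, hrs, hrv, hsv⟩ := hv'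
    have hw1 : ∃ w1, G.Adj v w1 ∧ w1 ≠ u := by
      rcases hshare p q u v hpq huv with h | h | h | h
      · exact absurd h hpu
      · exact ⟨q, h ▸ hpq, hqu⟩
      · exact absurd h hqu
      · exact ⟨p, (h ▸ hpq).symm, hpu⟩
    have hx1 : ∃ x1, G.Adj u x1 ∧ x1 ≠ v := by
      rcases hshare r s u v hrs huv with h | h | h | h
      · exact ⟨s, h ▸ hrs, hsv⟩
      · exact absurd h hrv
      · exact ⟨r, (h ▸ hrs).symm, hrv⟩
      · exact absurd h hsv
    obtain ⟨w1, hvw1, hw1u⟩ := hw1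
    obtain ⟨x1, hux1, hx1v⟩ := hx1
    have hww : w1 = x1 := by
      rcases hshare v w1 u x1 hvw1 hux1 with h | h | h | h
      · exact absurd h huv.ne'
      · exact absurd h.symm hx1v
      · exact absurd h hw1u
      · exact h
    have huw : G.Adj u w1 := hww ▸ hux1
    have hall : ∀ x : V, x = u ∨ x = v ∨ x = w1 := by
      intro x
      by_contra hx
      push_neg at hx
      obtain ⟨hxu, hxv, hxw⟩ := hx
      obtain ⟨y, hxy⟩ := exists_neighbor (hconn x u) hxu
      have h1 := hshare x y u v hxy huv
      have h2 := hshare x y u w1 hxy huw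
      have h3 := hshare x y v w1 hxy hvw1
      rcases h1 with h | h | h | h
      · exact hxu h
      · exact hxv h
      · subst h
        rcases h3 with h | h | h | h
        · exact hxv h
        · exact hxw h
        · exact huv.ne h
        · exact huw.ne h
      · subst h
        rcases h2 with h | h | h | h
        · exact hxu h
        · exact hxw h
        · exact huv.ne h.symm
        · exact hvw1.ne h
    left
    have hvu : v ≠ u := huv.ne'
    have hwu : w1 ≠ u := hw1u
    have hwv : w1 ≠ v := hvw1.ne'
    refine ⟨⟨⟨fun x => if x = u then 0 else if x = v then 1 else 2, ![u, v, w1],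
      ?_, ?_⟩, ?_⟩⟩
    · intro x
      rcases hall x with rfl | rfl | rfl
      · simp
      · simp [hvu]
      · simp [hwu, hwv]
    · intro i
      fin_cases i
      · simp
      · simp [hvu]
      · simp [hwu, hwv]
    · intro x y
      simp only [Equiv.coe_fn_mk, SimpleGraph.top_adj]
      rcases hall x with rfl | rfl | rfl <;> rcases hall y with rfl | rfl | rfl <;>
        simp [hvu, hwu, hwv, huv, hvw1, huw, huv.symm, hvw1.symm, huw.symm,
          SimpleGraph.irrefl]
  · -- C3 or star → no disjoint edges
    rintro (hK | ⟨n, hn, hS⟩) <;> rintro ⟨a, b, c, d, hab, hcd, hac, had, hbc, hbd⟩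
    · obtain ⟨f⟩ := hK
      have h1 : f a ≠ f b := fun h => hab.ne (f.injective h)
      have h2 : f c ≠ f d := fun h => hcd.ne (f.injective h)
      have h3 : f a ≠ f c := fun h => hac (f.injective h)
      have h4 : f a ≠ f d := fun h => had (f.injective h)
      have h5 : f b ≠ f c := fun h => hbc (f.injective h)
      have h6 : f b ≠ f d := fun h => hbd (f.injective h)
      have := (by decide :
        ∀ p q r s : Fin 3, p = q ∨ r = s ∨ p = r ∨ p = s ∨ q = r ∨ q = s)
        (f a) (f b) (f c) (f d)
      tauto
    · obtain ⟨f⟩ := hS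
      have h1 : (starGraph n).Adj (f a) (f b) := f.map_rel_iff.mpr hab
      have h2 : (starGraph n).Adj (f c) (f d) := f.map_rel_iff.mpr hcd
      simp only [starGraph, SimpleGraph.fromRel_adj] at h1 h2
      obtain ⟨-, h1⟩ := h1
      obtain ⟨-, h2⟩ := h2
      have key : ∀ p q : Fin n, (p : ℕ) = 0 → (q : ℕ) = 0 → p = q :=
        fun p q hp hq => Fin.ext (hp.trans hq.symm)
      rcases h1 with h | h <;> rcases h2 with h' | h'
      · exact hac (f.injective (key _ _ h h'))
      · exact had (f.injective (key _ _ h h'))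
      · exact hbc (f.injective (key _ _ h h'))
      · exact hbd (f.injective (key _ _ h h'))
end

section
/- Let G be a finite simple connected nontrivial graph. The LCM lattice of the edge ideal I(G) is a Boolean lattice if and only if G is a star graph. -/
lemma subtype_empty_aux {α : Type*} (p : α → Prop) [DecidablePred p] :
    (∅ : Finset α).subtype p = ∅ := by
  ext a
  simp [Finset.mem_subtype]

/-- If every edge of `G` has `c` as one endpoint, the LCM lattice of `G` is Boolean. -/
lemma star_orderIso_aux {V : Type*} [Fintype V] (G : SimpleGraph V) (c : V)
    (hadj : ∀ x y, G.Adj x y ↔ x ≠ y ∧ (x = c ∨ y = c)) :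
    ∃ k : ℕ, Nonempty (EdgeLcmLattice G ≃o Finset (Fin k)) := by
  classical
  have hmem : ∀ S : EdgeLcmLattice G, ∀ v ∈ S.1, c ∈ S.1 ∧ ∃ w ∈ S.1, w ≠ c := by
    intro S v hv
    obtain ⟨w, hw, hvw⟩ := S.2 v hv
    rw [hadj] at hvw
    obtain ⟨hne, h | h⟩ := hvw
    · subst h; exact ⟨hv, w, hw, Ne.symm hne⟩
    · subst h; exact ⟨hw, v, hv, hne⟩
  let toF : EdgeLcmLattice G → Finset {x : V // x ≠ c} := fun S => S.1.subtype (· ≠ c)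
  let invF : Finset {x : V // x ≠ c} → EdgeLcmLattice G := fun T =>
    if h : T = ∅ then ⟨∅, fun v hv => absurd hv (Finset.notMem_empty v)⟩
    else ⟨insert c (T.map (Function.Embedding.subtype _)), by
      intro v hv
      rcases Finset.mem_insert.mp hv with rfl | hv'
      · obtain ⟨t, ht⟩ := Finset.nonempty_iff_ne_empty.mpr h
        refine ⟨t.1, Finset.mem_insert_of_mem ?_, ?_⟩
        · exact (Finset.mem_map' _).mpr ht
        · rw [hadj]; exact ⟨Ne.symm t.2, Or.inl rfl⟩
      · obtain ⟨t, _, ht2⟩ := Finset.mem_map.mp hv'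
        refine ⟨c, Finset.mem_insert_self _ _, ?_⟩
        rw [hadj]
        refine ⟨?_, Or.inr rfl⟩
        rw [← ht2]; exact t.2⟩
  have left_inv : Function.LeftInverse invF toF := by
    intro S
    apply Subtype.ext
    by_cases hS : S.1 = ∅
    · have hT : toF S = ∅ := Finset.eq_empty_of_forall_notMem fun a ha => by
        have h' := Finset.mem_subtype.mp ha
        rw [hS] at h'
        exact absurd h' (Finset.notMem_empty _)
      simp only [invF, hT, dif_pos]
      exact hS.symm
    · obtain ⟨v, hv⟩ := Finset.nonempty_iff_ne_empty.mpr hS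
      obtain ⟨hc, w, hw, hwc⟩ := hmem S v hv
      have hT : toF S ≠ ∅ := by
        apply Finset.nonempty_iff_ne_empty.mp
        exact ⟨⟨w, hwc⟩, Finset.mem_subtype.mpr hw⟩
      simp only [invF, hT, dif_neg, not_false_iff]
      show insert c ((S.1.subtype (· ≠ c)).map (Function.Embedding.subtype _)) = S.1
      rw [Finset.subtype_map]
      ext x
      simp only [Finset.mem_insert, Finset.mem_filter]
      constructor
      · rintro (rfl | ⟨hx, _⟩)
        · exact hc
        · exact hx
      · intro hx
        by_cases hxc : x = c
        · exact Or.inl hxc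
        · exact Or.inr ⟨hx, hxc⟩
  have right_inv : Function.RightInverse invF toF := by
    intro T
    by_cases hT : T = ∅
    · subst hT
      show toF (invF ∅) = ∅
      simp only [invF, dif_pos]
      show Finset.subtype _ (∅ : Finset V) = ∅
      exact subtype_empty_aux _
    · simp only [invF, hT, dif_neg, not_false_iff]
      ext y
      rw [Finset.mem_subtype]
      show (y : V) ∈ insert c (T.map (Function.Embedding.subtype _)) ↔ y ∈ T
      rw [Finset.mem_insert]
      constructor
      · rintro (h | h)
        · exact absurd h y.2
        · have : (Function.Embedding.subtype (· ≠ c)) y ∈ T.map (Function.Embedding.subtype _) := by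
            simpa using h
          exact (Finset.mem_map' _).mp this
      · intro h
        right
        simpa using (Finset.mem_map' (Function.Embedding.subtype (· ≠ c))).mpr h
  let φ : EdgeLcmLattice G ≃o Finset {x : V // x ≠ c} :=
    { toFun := toF
      invFun := invF
      left_inv := left_inv
      right_inv := right_inv
      map_rel_iff' := by
        intro S₁ S₂
        show toF S₁ ⊆ toF S₂ ↔ S₁.1 ⊆ S₂.1
        constructor
        · intro h x hx
          obtain ⟨hc1, w, hw, hwc⟩ := hmem S₁ x hx
          by_cases hxc : x = c
          · have h1 : (⟨w, hwc⟩ : {x : V // x ≠ c}) ∈ toF S₂ := h (Finset.mem_subtype.mpr hw)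
            have hw2 : w ∈ S₂.1 := Finset.mem_subtype.mp h1
            exact hxc ▸ (hmem S₂ w hw2).1
          · exact Finset.mem_subtype.mp (h (Finset.mem_subtype.mpr hx :
              (⟨x, hxc⟩ : {x : V // x ≠ c}) ∈ toF S₁))
        · intro h; exact Finset.subtype_mono h }
  let e : {x : V // x ≠ c} ≃ Fin (Fintype.card {x : V // x ≠ c}) := Fintype.equivFin _
  let ψ : Finset {x : V // x ≠ c} ≃o Finset (Fin (Fintype.card {x : V // x ≠ c})) :=
    { toEquiv := e.finsetCongr
      map_rel_iff' := by
        intro s t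
        simp [Equiv.finsetCongr_apply, Finset.map_subset_map] }
  exact ⟨_, ⟨φ.trans ψ⟩⟩

/-- If `c` has a neighbor and all neighbors of `c` are leaves, connectivity forces star shape. -/
lemma star_char {V : Type*} (G : SimpleGraph V) (hconn : G.Connected) (c v₀ : V)
    (hc : G.Adj c v₀) (hleaf : ∀ x, G.Adj c x → ∀ z, G.Adj x z → z = c) :
    ∀ x y, G.Adj x y ↔ x ≠ y ∧ (x = c ∨ y = c) := by
  have step : ∀ {a b : V}, (a = c ∨ G.Adj c a) → G.Adj a b → (b = c ∨ G.Adj c b) := by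
    rintro a b (rfl | h) hab
    · exact Or.inr hab
    · exact Or.inl (hleaf a h b hab)
  have key : ∀ {a x : V}, G.Walk a x → (a = c ∨ G.Adj c a) → (x = c ∨ G.Adj c x) := by
    intro a x w
    induction w with
    | nil => exact id
    | cons hab q ih => intro ha; exact ih (step ha hab)
  have hP : ∀ x, x = c ∨ G.Adj c x := fun x => (hconn c x).elim fun w => key w (Or.inl rfl)
  intro x y
  constructor
  · intro h
    refine ⟨h.ne, ?_⟩
    rcases hP x with rfl | hx
    · exact Or.inl rfl
    · exact Or.inr (hleaf x hx y h)
  · rintro ⟨hne, rfl | rfl⟩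
    · rcases hP y with rfl | hy
      · exact absurd rfl hne
      · exact hy
    · rcases hP x with rfl | hx
      · exact absurd rfl hne
      · exact hx.symm

/-- The LCM lattice of the edge ideal of a connected nontrivial graph `G` is Boolean
(order-isomorphic to the lattice of subsets of a finite set) iff `G` is a star graph. -/
theorem boolean_edge_lcm_lattice_iff_star {V : Type*} [Fintype V]
    (G : SimpleGraph V) (hconn : G.Connected) (hnt : ∃ a b : V, G.Adj a b) :
    (∃ k : ℕ, Nonempty (EdgeLcmLattice G ≃o Finset (Fin k))) ↔
      ∃ n : ℕ, 2 ≤ n ∧ Nonempty (G ≃g starGraph n) := by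
  classical
  constructor
  · rintro ⟨k, ⟨φ⟩⟩
    obtain ⟨u, v, huv⟩ := hnt
    -- bottom element
    let bot : EdgeLcmLattice G := ⟨∅, fun v hv => absurd hv (Finset.notMem_empty v)⟩
    have hbotle : ∀ t : EdgeLcmLattice G, bot ≤ t := fun t => Finset.empty_subset t.1
    have hφbot : φ bot = ∅ := by
      have h1 : φ bot ⊆ φ (φ.symm ∅) := φ.monotone (hbotle _)
      rw [φ.apply_symm_apply] at h1
      exact Finset.subset_empty.mp h1
    -- no "path configuration"
    have noconf : ∀ a b c d : V, G.Adj a b → G.Adj b c → G.Adj c d → a ≠ c → b ≠ d → False := by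
      intro a b c d hab hbc hcd hac hbd
      have pair : ∀ {x y : V}, G.Adj x y → IsUnionOfEdges G {x, y} := by
        intro x y h z hz
        rcases Finset.mem_insert.mp hz with rfl | hz'
        · exact ⟨y, Finset.mem_insert_of_mem (Finset.mem_singleton_self y), h⟩
        · rw [Finset.mem_singleton] at hz'
          subst hz'
          exact ⟨x, Finset.mem_insert_self _ _, h.symm⟩
      let eab : EdgeLcmLattice G := ⟨{a, b}, pair hab⟩
      let ecd : EdgeLcmLattice G := ⟨{c, d}, pair hcd⟩
      let ebc : EdgeLcmLattice G := ⟨{b, c}, pair hbc⟩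
      let e12 : EdgeLcmLattice G := ⟨{a, b} ∪ {c, d}, by
        intro z hz
        rcases Finset.mem_union.mp hz with h | h
        · obtain ⟨w, hw, hadjw⟩ := pair hab z h
          exact ⟨w, Finset.mem_union_left _ hw, hadjw⟩
        · obtain ⟨w, hw, hadjw⟩ := pair hcd z h
          exact ⟨w, Finset.mem_union_right _ hw, hadjw⟩⟩
      have hab12 : eab ≤ e12 := Finset.subset_union_left
      have hcd12 : ecd ≤ e12 := Finset.subset_union_right
      have hbc12 : ebc ≤ e12 := by
        intro x hx
        rcases Finset.mem_insert.mp hx with rfl | hx'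
        · exact Finset.mem_union_left _ (by simp)
        · rw [Finset.mem_singleton] at hx'
          subst hx'
          exact Finset.mem_union_right _ (by simp)
      have hsup : φ e12 = φ eab ∪ φ ecd := by
        apply subset_antisymm
        · have h1 : e12 ≤ φ.symm (φ eab ∪ φ ecd) := by
            intro x hx
            rcases Finset.mem_union.mp hx with h | h
            · exact (φ.le_symm_apply.mpr Finset.subset_union_left : eab ≤ _) h
            · exact (φ.le_symm_apply.mpr Finset.subset_union_right : ecd ≤ _) h
          have h2 := φ.monotone h1
          rwa [φ.apply_symm_apply] at h2
        · exact Finset.union_subset (φ.monotone hab12) (φ.monotone hcd12)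
      have hmeet : ∀ (e : EdgeLcmLattice G) (x0 : V), (ebc.1 ∩ e.1 ⊆ {x0}) →
          φ ebc ∩ φ e = ∅ := by
        intro e x0 hsub
        have h1 : φ.symm (φ ebc ∩ φ e) ≤ ebc := φ.symm_apply_le.mpr Finset.inter_subset_left
        have h2 : φ.symm (φ ebc ∩ φ e) ≤ e := φ.symm_apply_le.mpr Finset.inter_subset_right
        have hcar : (φ.symm (φ ebc ∩ φ e)).1 = ∅ := by
          by_contra hne
          obtain ⟨x, hx⟩ := Finset.nonempty_iff_ne_empty.mpr hne
          obtain ⟨w, hw, hxw⟩ := (φ.symm (φ ebc ∩ φ e)).2 x hx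
          have hx0 : x = x0 := Finset.mem_singleton.mp (hsub (Finset.mem_inter.mpr ⟨h1 hx, h2 hx⟩))
          have hw0 : w = x0 := Finset.mem_singleton.mp (hsub (Finset.mem_inter.mpr ⟨h1 hw, h2 hw⟩))
          subst hx0; subst hw0
          exact G.irrefl hxw
        have hb : φ.symm (φ ebc ∩ φ e) = bot := Subtype.ext hcar
        calc φ ebc ∩ φ e = φ (φ.symm (φ ebc ∩ φ e)) := (φ.apply_symm_apply _).symm
          _ = φ bot := by rw [hb]
          _ = ∅ := hφbot
      have hm1 : φ ebc ∩ φ eab = ∅ := by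
        apply hmeet eab b
        intro x hx
        rw [Finset.mem_inter] at hx
        obtain ⟨h1', h2'⟩ := hx
        simp only [ebc, eab, Finset.mem_insert, Finset.mem_singleton] at h1' h2' ⊢
        rcases h1' with rfl | rfl
        · rfl
        · rcases h2' with h | h
          · exact absurd h.symm hac
          · exact absurd h (Ne.symm hbc.ne)
      have hm2 : φ ebc ∩ φ ecd = ∅ := by
        apply hmeet ecd c
        intro x hx
        rw [Finset.mem_inter] at hx
        obtain ⟨h1', h2'⟩ := hx
        simp only [ebc, ecd, Finset.mem_insert, Finset.mem_singleton] at h1' h2' ⊢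
        rcases h1' with rfl | rfl
        · rcases h2' with h | h
          · exact absurd h hbc.ne
          · exact absurd h hbd
        · rfl
      have h3 : φ ebc ⊆ φ e12 := φ.monotone hbc12
      have hφbc : φ ebc = ∅ := by
        calc φ ebc = φ ebc ∩ φ e12 := (Finset.inter_eq_left.mpr h3).symm
          _ = φ ebc ∩ (φ eab ∪ φ ecd) := by rw [hsup]
          _ = (φ ebc ∩ φ eab) ∪ (φ ebc ∩ φ ecd) := Finset.inter_union_distrib_left _ _ _
          _ = ∅ := by rw [hm1, hm2]; simp
      have hbceq : ebc = bot := φ.injective (by rw [hφbc, hφbot])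
      have hbmem : b ∈ (∅ : Finset V) := by
        have hb : b ∈ ebc.1 := Finset.mem_insert_self _ _
        rwa [hbceq] at hb
      exact absurd hbmem (Finset.notMem_empty b)
    -- find a center
    have hchar : ∃ c : V, ∀ x y, G.Adj x y ↔ x ≠ y ∧ (x = c ∨ y = c) := by
      by_cases hA : ∃ w, G.Adj v w ∧ w ≠ u
      · obtain ⟨w, hvw, hwu⟩ := hA
        refine ⟨v, star_char G hconn v u huv.symm ?_⟩
        intro x hvx z hxz
        by_contra hz
        by_cases hxu : x = u
        · exact noconf w v x z hvw.symm hvx hxz (hxu ▸ hwu) (Ne.symm hz)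
        · exact noconf u v x z huv hvx hxz (Ne.symm hxu) (Ne.symm hz)
      · push_neg at hA
        refine ⟨u, star_char G hconn u v huv ?_⟩
        intro x hux z hxz
        by_contra hz
        by_cases hx : x = v
        · subst hx
          exact hz (hA z hxz)
        · exact noconf v u x z huv.symm hux hxz (fun h => hx h.symm) (Ne.symm hz)
    obtain ⟨c, hadjc⟩ := hchar
    -- build iso to starGraph (card V)
    have hcard : 2 ≤ Fintype.card V := by
      have : Nontrivial V := ⟨u, v, huv.ne⟩
      exact Fintype.one_lt_card
    haveI : NeZero (Fintype.card V) := ⟨by omega⟩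
    refine ⟨Fintype.card V, hcard, ?_⟩
    let e0 : V ≃ Fin (Fintype.card V) := Fintype.equivFin V
    let e' : V ≃ Fin (Fintype.card V) := e0.trans (Equiv.swap (e0 c) 0)
    have hec : e' c = 0 := by simp [e']
    have h0 : ∀ x : V, ((e' x : Fin (Fintype.card V)) : ℕ) = 0 ↔ x = c := by
      intro x
      have hv0 : ((e' x : Fin (Fintype.card V)) : ℕ) = 0 ↔ e' x = 0 := by
        constructor
        · intro h; exact Fin.ext (by simpa using h)
        · intro h; rw [h]; simp
      rw [hv0, ← hec, Equiv.apply_eq_iff_eq]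
    refine ⟨⟨e', ?_⟩⟩
    intro x y
    show (starGraph _).Adj (e' x) (e' y) ↔ G.Adj x y
    simp only [starGraph, SimpleGraph.fromRel_adj]
    rw [hadjc x y]
    constructor
    · rintro ⟨hne, h | h⟩
      · exact ⟨fun hxy => hne (by rw [hxy]), Or.inl ((h0 x).mp h)⟩
      · exact ⟨fun hxy => hne (by rw [hxy]), Or.inr ((h0 y).mp h)⟩
    · rintro ⟨hne, h | h⟩
      · exact ⟨fun hxy => hne (e'.injective hxy), Or.inl ((h0 x).mpr h)⟩
      · exact ⟨fun hxy => hne (e'.injective hxy), Or.inr ((h0 y).mpr h)⟩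
  · rintro ⟨n, hn, ⟨f⟩⟩
    haveI : NeZero n := ⟨by omega⟩
    set c := f.symm 0 with hc
    apply star_orderIso_aux G c
    intro x y
    rw [← f.map_rel_iff]
    show (starGraph n).Adj (f x) (f y) ↔ _
    simp only [starGraph, SimpleGraph.fromRel_adj]
    have h0 : ∀ a : V, ((f a : Fin n) : ℕ) = 0 ↔ a = c := by
      intro a
      have hv0 : ((f a : Fin n) : ℕ) = 0 ↔ (f a : Fin n) = 0 := by
        constructor
        · intro h; exact Fin.ext (by simpa using h)
        · intro h; rw [h]; simp
      rw [hv0, hc]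
      exact Equiv.apply_eq_iff_eq_symm_apply f.toEquiv
    constructor
    · rintro ⟨hne, h | h⟩
      · exact ⟨fun hxy => hne (by rw [hxy]), Or.inl ((h0 x).mp h)⟩
      · exact ⟨fun hxy => hne (by rw [hxy]), Or.inr ((h0 y).mp h)⟩
    · rintro ⟨hne, h | h⟩
      · refine ⟨fun hxy => hne (f.injective hxy), Or.inl ((h0 x).mpr h)⟩
      · refine ⟨fun hxy => hne (f.injective hxy), Or.inr ((h0 y).mpr h)⟩
end

section
/- Let G be a finite simple connected nontrivial graph that is not a star graph. The LCM lattice of the edge ideal I(G) is coatomic if and only if every vertex of G has degree at least 2. -/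
/-- A coatom of the LCM lattice: an element covered by the top element `univ`. -/
def IsEdgeLatCoatom {V : Type*} [Fintype V] (G : SimpleGraph V)
    (c : EdgeLcmLattice G) : Prop :=
  (c : Finset V) ≠ Finset.univ ∧ ∀ y : EdgeLcmLattice G, c < y → (y : Finset V) = Finset.univ

section Aux

variable {V : Type*}

lemma core_mem_iff [DecidableEq V] (G : SimpleGraph V) [DecidableRel G.Adj] {X : Finset V}
    {v : V} : v ∈ core G X ↔ v ∈ X ∧ ∃ w ∈ X, G.Adj v w := by
  simp [core]

lemma core_isUnion [DecidableEq V] (G : SimpleGraph V) [DecidableRel G.Adj] (X : Finset V) :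
    IsUnionOfEdges G (core G X) := by
  intro v hv
  rw [core_mem_iff] at hv
  obtain ⟨hvX, w, hwX, hadj⟩ := hv
  exact ⟨w, (core_mem_iff G).2 ⟨hwX, v, hvX, hadj.symm⟩, hadj⟩

lemma subset_core [DecidableEq V] (G : SimpleGraph V) [DecidableRel G.Adj] {S X : Finset V}
    (hS : IsUnionOfEdges G S) (hSX : S ⊆ X) : S ⊆ core G X := fun v hv => by
  obtain ⟨w, hw, hadj⟩ := hS v hv
  exact (core_mem_iff G).2 ⟨hSX hv, w, hSX hw, hadj⟩

lemma core_eq_self [DecidableEq V] {G : SimpleGraph V} [DecidableRel G.Adj] {S : Finset V}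
    (hS : IsUnionOfEdges G S) : core G S = S :=
  le_antisymm (Finset.filter_subset _ _) (subset_core G hS le_rfl)

/-- If `G` consists of a center `c` joined to all other vertices and no other edges, then
`G` is a star graph. -/
lemma star_iso [Fintype V] [DecidableEq V] (G : SimpleGraph V) (c : V)
    (h1 : ∀ w, w = c ∨ G.Adj c w) (h2 : ∀ a b, G.Adj a b → a = c ∨ b = c) :
    ∃ n, Nonempty (G ≃g starGraph n) := by
  classical
  set n := Fintype.card V with hn
  have hn0 : 0 < n := Fintype.card_pos_iff.2 ⟨c⟩
  haveI : NeZero n := ⟨hn0.ne'⟩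
  let e : V ≃ Fin n := (Fintype.equivFin V).trans (Equiv.swap (Fintype.equivFin V c) 0)
  have hec : e c = 0 := by simp [e]
  have h0 : ∀ a : V, e a = 0 ↔ a = c := fun a => by
    rw [← hec, EquivLike.apply_eq_iff_eq]
  have h0' : ∀ a : V, ((e a : Fin n) : ℕ) = 0 ↔ a = c := fun a => by
    rw [← h0 a, Fin.ext_iff, Fin.val_zero]
  have key : ∀ a b, G.Adj a b ↔ a ≠ b ∧ (a = c ∨ b = c) := by
    intro a b
    constructor
    · exact fun h => ⟨h.ne, h2 a b h⟩
    · rintro ⟨hne, h | h⟩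
      · subst h
        rcases h1 b with rfl | h
        · exact absurd rfl hne
        · exact h
      · subst h
        rcases h1 a with rfl | h
        · exact absurd rfl hne
        · exact h.symm
  refine ⟨n, ⟨⟨e, @fun a b => ?_⟩⟩⟩
  show (starGraph n).Adj (e a) (e b) ↔ G.Adj a b
  rw [key]
  simp only [starGraph, SimpleGraph.fromRel_adj, h0', ne_eq,
    EquivLike.apply_eq_iff_eq]

end Aux

/-- For a connected nontrivial non-star graph `G`, the LCM lattice of `I(G)` is
coatomic (every element is a meet of coatoms) iff every vertex has degree at least 2. -/
theorem coatomic_edge_lcm_lattice_iff_min_degree_two {V : Type*} [Fintype V]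
    [DecidableEq V] (G : SimpleGraph V) [DecidableRel G.Adj]
    (hconn : G.Connected) (hnt : ∃ a b : V, G.Adj a b)
    (hnostar : ¬ ∃ n : ℕ, Nonempty (G ≃g starGraph n)) :
    (∀ x : EdgeLcmLattice G, ∃ s : Finset (EdgeLcmLattice G),
        (∀ c ∈ s, IsEdgeLatCoatom G c) ∧
        (x : Finset V) = core G (s.inf fun c => (c : Finset V))) ↔
      ∀ v : V, 2 ≤ G.degree v := by
  classical
  obtain ⟨a0, b0, hab0⟩ := hnt
  have hnbr : ∀ w : V, ∃ z, G.Adj w z := by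
    intro w
    by_cases hw : w = a0
    · exact ⟨b0, hw ▸ hab0⟩
    · obtain ⟨p⟩ := hconn w a0
      cases p with
      | nil => exact absurd rfl hw
      | cons h _ => exact ⟨_, h⟩
  constructor
  · -- coatomic → min degree 2
    intro hco
    by_contra hdeg
    push_neg at hdeg
    obtain ⟨v, hv2⟩ := hdeg
    have hd1 : G.degree v = 1 := by
      have h := (G.degree_pos_iff_exists_adj v).2 (hnbr v)
      omega
    obtain ⟨u, hu⟩ := Finset.card_eq_one.1 hd1
    have hadj_iff : ∀ w, G.Adj v w ↔ w = u := fun w => by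
      rw [← SimpleGraph.mem_neighborFinset, hu, Finset.mem_singleton]
    have hvu : G.Adj v u := (hadj_iff u).2 rfl
    -- `univ \ {v}` is a union of edges (else `G` is a star with center `v`)
    have hUv : IsUnionOfEdges G (Finset.univ \ {v}) := by
      intro w hw
      rw [Finset.mem_sdiff, Finset.mem_singleton] at hw
      by_cases hwu : w = u
      · subst hwu
        by_contra hcon
        push_neg at hcon
        have huv : ∀ z, G.Adj w z → z = v := by
          intro z hz
          by_contra hzv
          exact hcon z (by simp [Finset.mem_sdiff, hzv]) hz
        have walkmem : ∀ {s t : V}, G.Walk s t → (s = w ∨ s = v) → (t = w ∨ t = v) := by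
          intro s t p
          induction p with
          | nil => exact id
          | cons h _ ih =>
            intro hs
            apply ih
            rcases hs with rfl | rfl
            · right; exact huv _ h
            · left; exact (hadj_iff _).1 h
        have hdich : ∀ t, t = w ∨ t = v := fun t =>
          walkmem ((hconn w t).some) (Or.inl rfl)
        refine hnostar (star_iso G v ?_ ?_)
        · intro t
          rcases hdich t with rfl | rfl
          · exact Or.inr hvu
          · exact Or.inl rfl
        · intro x y hxy
          rcases hdich x with rfl | rfl
          · rcases hdich y with rfl | rfl
            · exact absurd hxy (G.irrefl)
            · exact Or.inr rfl
          · exact Or.inl rfl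
      · obtain ⟨z, hz⟩ := hnbr w
        refine ⟨z, ?_, hz⟩
        rw [Finset.mem_sdiff, Finset.mem_singleton]
        refine ⟨Finset.mem_univ z, ?_⟩
        rintro rfl
        exact hwu ((hadj_iff w).1 hz.symm)
    -- the counterexample element
    set X : Finset V := core G (Finset.univ \ {u}) with hXdef
    have hXu : u ∉ X := by
      intro h
      have := ((core_mem_iff G).1 h).1
      simp at this
    have hXv : v ∉ X := by
      intro h
      obtain ⟨_, z, hz, hadj⟩ := (core_mem_iff G).1 h
      rw [Finset.mem_sdiff, Finset.mem_singleton] at hz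
      exact hz.2 ((hadj_iff z).1 hadj)
    have hXisU : IsUnionOfEdges G X := core_isUnion G _
    -- non-star gives a vertex z adjacent to u with another neighbor
    have hz : ∃ z, G.Adj u z ∧ ∃ y, G.Adj z y ∧ y ≠ u := by
      by_contra hcon
      push_neg at hcon
      have hclose : ∀ a b, G.Adj u a → G.Adj a b → b = u := fun a b h1 h2 => hcon a h1 b h2
      have walkmem : ∀ {s t : V}, G.Walk s t → (s = u ∨ G.Adj u s) → (t = u ∨ G.Adj u t) := by
        intro s t p
        induction p with
        | nil => exact id
        | cons h _ ih =>
          intro hs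
          apply ih
          rcases hs with rfl | hs
          · right; exact h
          · left; exact hclose _ _ hs h
      have hdich : ∀ t, t = u ∨ G.Adj u t := fun t =>
        walkmem ((hconn u t).some) (Or.inl rfl)
      refine hnostar (star_iso G u hdich ?_)
      intro x y hxy
      rcases hdich x with rfl | hx
      · exact Or.inl rfl
      · exact Or.inr (hclose _ _ hx hxy)
    obtain ⟨z, huz, y, hzy, hyu⟩ := hz
    have hzX : z ∈ X := by
      refine (core_mem_iff G).2 ⟨?_, y, ?_, hzy⟩
      · rw [Finset.mem_sdiff, Finset.mem_singleton]
        exact ⟨Finset.mem_univ z, huz.ne'⟩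
      · rw [Finset.mem_sdiff, Finset.mem_singleton]
        exact ⟨Finset.mem_univ y, hyu⟩
    obtain ⟨s, hs, hxeq0⟩ := hco ⟨X, hXisU⟩
    have hxeq : X = core G (s.inf fun c => (c : Finset V)) := hxeq0
    -- every coatom contains u
    have hcu : ∀ c : EdgeLcmLattice G, IsEdgeLatCoatom G c → u ∈ (c : Finset V) := by
      intro c hc
      by_contra hcu
      have hsub : (c : Finset V) ⊆ X := by
        apply subset_core G c.2
        intro t ht
        rw [Finset.mem_sdiff, Finset.mem_singleton]
        refine ⟨Finset.mem_univ t, ?_⟩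
        rintro rfl
        exact hcu ht
      have hlt : c < (⟨Finset.univ \ {v}, hUv⟩ : EdgeLcmLattice G) := by
        rw [← Subtype.coe_lt_coe]
        refine lt_of_le_of_ne ?_ ?_
        · intro t ht
          rw [Finset.mem_sdiff, Finset.mem_singleton]
          refine ⟨Finset.mem_univ t, ?_⟩
          rintro rfl
          exact hXv (hsub ht)
        · intro h
          have : u ∈ (c : Finset V) := by
            rw [h, Finset.mem_sdiff, Finset.mem_singleton]
            exact ⟨Finset.mem_univ u, hvu.ne'⟩
          exact hcu this
      have heq : (Finset.univ \ ({v} : Finset V)) = Finset.univ := hc.2 _ hlt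
      have hv' : v ∈ (Finset.univ \ ({v} : Finset V)) := by
        rw [heq]; exact Finset.mem_univ v
      simp at hv'
    rcases s.eq_empty_or_nonempty with rfl | hne
    · rw [Finset.inf_empty, Finset.top_eq_univ] at hxeq
      have : core G (Finset.univ : Finset V) = Finset.univ := by
        apply core_eq_self
        intro w _
        obtain ⟨t, ht⟩ := hnbr w
        exact ⟨t, Finset.mem_univ t, ht⟩
      rw [this] at hxeq
      exact hXu (hxeq ▸ Finset.mem_univ u)
    · have hXinf : X ⊆ s.inf fun c => (c : Finset V) := by
        rw [hxeq]
        exact Finset.filter_subset _ _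
      have huinf : u ∈ s.inf fun c => (c : Finset V) :=
        Finset.mem_inf.2 fun c hc => hcu c (hs c hc)
      have hucore : u ∈ core G (s.inf fun c => (c : Finset V)) :=
        (core_mem_iff G).2 ⟨huinf, z, hXinf hzX, huz⟩
      rw [← hxeq] at hucore
      exact hXu hucore
  · -- min degree 2 → coatomic
    intro hdeg x
    have hco : ∀ w : V, IsUnionOfEdges G (Finset.univ \ {w}) := by
      intro w t ht
      have h2 : 1 < (G.neighborFinset t).card := hdeg t
      obtain ⟨a, ha, b, hb, hne⟩ := Finset.one_lt_card.1 h2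
      rw [SimpleGraph.mem_neighborFinset] at ha hb
      by_cases haw : a = w
      · refine ⟨b, ?_, hb⟩
        rw [Finset.mem_sdiff, Finset.mem_singleton]
        exact ⟨Finset.mem_univ b, fun h => hne (haw.trans h.symm)⟩
      · refine ⟨a, ?_, ha⟩
        rw [Finset.mem_sdiff, Finset.mem_singleton]
        exact ⟨Finset.mem_univ a, haw⟩
    refine ⟨(Finset.univ \ (x : Finset V)).image fun w => ⟨Finset.univ \ {w}, hco w⟩, ?_, ?_⟩
    · intro c hc
      obtain ⟨w, _, rfl⟩ := Finset.mem_image.1 hc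
      constructor
      · intro h
        have h' : Finset.univ \ ({w} : Finset V) = Finset.univ := h
        have : w ∈ Finset.univ \ ({w} : Finset V) := by
          rw [h']; exact Finset.mem_univ w
        simp at this
      · intro y hy
        have hy' : (Finset.univ \ {w} : Finset V) < (y : Finset V) := Subtype.coe_lt_coe.2 hy
        apply Finset.eq_univ_iff_forall.2
        intro t
        by_cases htw : t = w
        · subst htw
          by_contra hwny
          have hle : (y : Finset V) ⊆ Finset.univ \ {t} := by
            intro p hp
            rw [Finset.mem_sdiff, Finset.mem_singleton]
            refine ⟨Finset.mem_univ p, ?_⟩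
            rintro rfl
            exact hwny hp
          exact hy'.not_ge hle
        · apply hy'.le
          rw [Finset.mem_sdiff, Finset.mem_singleton]
          exact ⟨Finset.mem_univ t, htw⟩
    · rw [Finset.inf_image]
      have hinf : ((Finset.univ \ (x : Finset V)).inf
          ((fun c : EdgeLcmLattice G => (c : Finset V)) ∘ fun w => ⟨Finset.univ \ {w}, hco w⟩))
          = (x : Finset V) := by
        ext t
        rw [Finset.mem_inf]
        simp only [Function.comp]
        constructor
        · intro h
          by_contra htx
          have := h t (by rw [Finset.mem_sdiff]; exact ⟨Finset.mem_univ t, htx⟩)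
          simp at this
        · intro ht w hw
          rw [Finset.mem_sdiff] at hw
          rw [Finset.mem_sdiff, Finset.mem_singleton]
          refine ⟨Finset.mem_univ t, ?_⟩
          rintro rfl
          exact hw.2 ht
      rw [hinf, core_eq_self x.2]
end

section
/- Let G be a finite simple graph with a clique H such that every vertex of G not in H is adjacent to exactly one vertex of H, and no two such outside vertices are adjacent to each other. Then G is gap-free, C4-free, and diamond-free. -/
/-- `G` is `C4`-free: no induced 4-cycle. -/
def C4Free {V : Type*} (G : SimpleGraph V) : Prop :=
  ¬ ∃ a b c d : V, a ≠ c ∧ b ≠ d ∧ G.Adj a b ∧ G.Adj b c ∧ G.Adj c d ∧ G.Adj d a ∧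
    ¬ G.Adj a c ∧ ¬ G.Adj b d

/-- `G` is diamond-free: no induced `K4` minus an edge. -/
def DiamondFree {V : Type*} (G : SimpleGraph V) : Prop :=
  ¬ ∃ a b c d : V, b ≠ d ∧ G.Adj a b ∧ G.Adj b c ∧ G.Adj c d ∧ G.Adj d a ∧
    G.Adj a c ∧ ¬ G.Adj b d

/-- If `G` has a clique `H` such that every vertex outside `H` is adjacent to exactly
one vertex of `H`, and no two outside vertices are adjacent, then `G` is gap-free,
`C4`-free and diamond-free. -/
theorem gapFree_c4Free_diamondFree_of_clique_structure {V : Type*} [Fintype V]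
    [DecidableEq V] (G : SimpleGraph V) (H : Finset V)
    (hclique : ∀ u ∈ H, ∀ v ∈ H, u ≠ v → G.Adj u v)
    (hout : ∀ v : V, v ∉ H → ∃! w : V, w ∈ H ∧ G.Adj v w)
    (hnoout : ∀ v w : V, v ∉ H → w ∉ H → ¬ G.Adj v w) :
    GapFree G ∧ C4Free G ∧ DiamondFree G := by
  have ep : ∀ x y : V, G.Adj x y → x ∈ H ∨ y ∈ H := by
    intro x y hxy
    by_contra h
    push_neg at h
    exact hnoout x y h.1 h.2 hxy
  refine ⟨?_, ?_, ?_⟩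
  · rintro ⟨a, b, c, d, hab, hcd, hac, had, hbc, hbd, nac, nad, nbc, nbd⟩
    rcases ep a b hab with ha | hb <;> rcases ep c d hcd with hc | hd
    · exact nac (hclique a ha c hc hac)
    · exact nad (hclique a ha d hd had)
    · exact nbc (hclique b hb c hc hbc)
    · exact nbd (hclique b hb d hd hbd)
  · rintro ⟨a, b, c, d, hac, hbd, hab, hbc, hcd, hda, nac, nbd⟩
    by_cases ha : a ∈ H
    · by_cases hc : c ∈ H
      · exact nac (hclique a ha c hc hac)
      · -- c ∉ H, c adj b and d, so b, d ∈ H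
        have hb : b ∈ H := (ep c b hbc.symm).resolve_left hc
        have hd : d ∈ H := (ep c d hcd).resolve_left hc
        exact nbd (hclique b hb d hd hbd)
    · have hb : b ∈ H := (ep a b hab).resolve_left ha
      have hd : d ∈ H := (ep a d hda.symm).resolve_left ha
      exact nbd (hclique b hb d hd hbd)
  · rintro ⟨a, b, c, d, hbd, hab, hbc, hcd, hda, hac, nbd⟩
    by_cases hb : b ∈ H
    · by_cases hd : d ∈ H
      · exact nbd (hclique b hb d hd hbd)
      · have ha : a ∈ H := (ep d a hda).resolve_left hd
        have hc : c ∈ H := (ep d c hcd.symm).resolve_left hd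
        obtain ⟨w, _, huniq⟩ := hout d hd
        have : a = c := (huniq a ⟨ha, hda⟩).trans (huniq c ⟨hc, hcd.symm⟩).symm
        exact hac.ne this
    · have ha : a ∈ H := (ep b a hab.symm).resolve_left hb
      have hc : c ∈ H := (ep b c hbc).resolve_left hb
      obtain ⟨w, _, huniq⟩ := hout b hb
      have : a = c := (huniq a ⟨ha, hab.symm⟩).trans (huniq c ⟨hc, hbc⟩).symm
      exact hac.ne this
end

section
/- Let G be a finite simple connected graph that is gap-free, C4-free, and diamond-free. Then G has at most one maximal clique of size at least 3. -/
/-- A maximal clique of `G`. -/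
def IsMaximalClique {V : Type*} (G : SimpleGraph V) (H : Finset V) : Prop :=
  G.IsClique (H : Set V) ∧ ∀ K : Finset V, G.IsClique (K : Set V) → H ⊆ K → H = K

/-- A connected gap-free, `C4`-free, diamond-free graph has at most one maximal clique
of size at least 3. -/
theorem at_most_one_big_maximal_clique {V : Type*} [Fintype V] [DecidableEq V]
    (G : SimpleGraph V) (hconn : G.Connected)
    (hgap : GapFree G) (hc4 : C4Free G) (hdia : DiamondFree G) :
    ∀ H K : Finset V, IsMaximalClique G H → IsMaximalClique G K →
      3 ≤ H.card → 3 ≤ K.card → H = K := by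
  intro H K hH hK hHc hKc
  by_contra hne
  obtain ⟨hHcl, hHmax⟩ := hH
  obtain ⟨hKcl, hKmax⟩ := hK
  -- Key lemma: a vertex outside a maximal clique cannot have two neighbors in it.
  have key : ∀ (L : Finset V), G.IsClique (L : Set V) →
      (∀ M : Finset V, G.IsClique (M : Set V) → L ⊆ M → L = M) →
      ∀ y, y ∉ L → ∀ x ∈ L, ∀ x' ∈ L, x ≠ x' → G.Adj y x → G.Adj y x' → False := by
    intro L hcl hmax y hy x hx x' hx' hxx' h1 h2
    have hall : ∀ z ∈ L, G.Adj y z := by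
      intro z hz
      by_cases hzx : z = x
      · exact hzx ▸ h1
      by_cases hzx' : z = x'
      · exact hzx' ▸ h2
      by_contra hnz
      exact hdia ⟨x, z, x', y, fun h => hy (h ▸ hz),
        hcl (Finset.mem_coe.mpr hx) (Finset.mem_coe.mpr hz) (fun h => hzx h.symm),
        hcl (Finset.mem_coe.mpr hz) (Finset.mem_coe.mpr hx') hzx',
        h2.symm, h1,
        hcl (Finset.mem_coe.mpr hx) (Finset.mem_coe.mpr hx') hxx',
        fun h => hnz h.symm⟩
    have hclins : G.IsClique ((insert y L : Finset V) : Set V) := by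
      rw [Finset.coe_insert]
      exact hcl.insert (fun z hz _ => hall z (Finset.mem_coe.mp hz))
    have heq := hmax (insert y L) hclins (Finset.subset_insert _ _)
    exact hy (by rw [heq]; exact Finset.mem_insert_self _ _)
  by_cases hcc : ∃ a ∈ H ∩ K, ∃ c ∈ H ∩ K, a ≠ c
  · -- two common vertices: diamond
    obtain ⟨a, ha, c, hc, hac⟩ := hcc
    obtain ⟨haH, haK⟩ := Finset.mem_inter.mp ha
    obtain ⟨hcH, hcK⟩ := Finset.mem_inter.mp hc
    -- H ⊄ K since H ≠ K and H maximal
    obtain ⟨b, hbH, hbK⟩ : ∃ b ∈ H, b ∉ K := by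
      by_contra h
      push_neg at h
      exact hne (hHmax K hKcl h)
    -- b misses some vertex of K
    obtain ⟨d, hdK, hbd⟩ : ∃ d ∈ K, ¬ G.Adj b d := by
      by_contra h
      push_neg at h
      have hclins : G.IsClique ((insert b K : Finset V) : Set V) := by
        rw [Finset.coe_insert]
        exact hKcl.insert (fun z hz _ => h z (Finset.mem_coe.mp hz))
      have heq := hKmax (insert b K) hclins (Finset.subset_insert _ _)
      exact hbK (by rw [heq]; exact Finset.mem_insert_self _ _)
    have hdH : d ∉ H := by
      intro hdH
      exact hbd (hHcl (Finset.mem_coe.mpr hbH) (Finset.mem_coe.mpr hdH)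
        (fun h => hbK (h ▸ hdK)))
    exact hdia ⟨a, b, c, d, fun h => hbK (h ▸ hdK),
      hHcl (Finset.mem_coe.mpr haH) (Finset.mem_coe.mpr hbH) (fun h => hbK (h ▸ haK)),
      hHcl (Finset.mem_coe.mpr hbH) (Finset.mem_coe.mpr hcH) (fun h => hbK (h.symm ▸ hcK)),
      hKcl (Finset.mem_coe.mpr hcK) (Finset.mem_coe.mpr hdK) (fun h => hdH (h ▸ hcH)),
      hKcl (Finset.mem_coe.mpr hdK) (Finset.mem_coe.mpr haK) (fun h => hdH (h.symm ▸ haH)),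
      hHcl (Finset.mem_coe.mpr haH) (Finset.mem_coe.mpr hcH) hac,
      hbd⟩
  push_neg at hcc
  by_cases hv : ∃ v, v ∈ H ∩ K
  · -- exactly one common vertex v: gap
    obtain ⟨v, hvHK⟩ := hv
    obtain ⟨hvH, hvK⟩ := Finset.mem_inter.mp hvHK
    have hHnK : ∀ x ∈ H.erase v, x ∉ K := by
      intro x hx hxK
      obtain ⟨hxv, hxH⟩ := Finset.mem_erase.mp hx
      exact hxv (hcc x (Finset.mem_inter.mpr ⟨hxH, hxK⟩) v hvHK)
    have hKnH : ∀ y ∈ K.erase v, y ∉ H := by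
      intro y hy hyH
      obtain ⟨hyv, hyK⟩ := Finset.mem_erase.mp hy
      exact hyv (hcc y (Finset.mem_inter.mpr ⟨hyH, hyK⟩) v hvHK)
    have hna : ∀ x ∈ H.erase v, ∀ y ∈ K.erase v, ¬ G.Adj x y := by
      intro x hx y hy hadj
      obtain ⟨hxv, hxH⟩ := Finset.mem_erase.mp hx
      obtain ⟨hyv, hyK⟩ := Finset.mem_erase.mp hy
      have hyv' : G.Adj y v := hKcl (Finset.mem_coe.mpr hyK) (Finset.mem_coe.mpr hvK) hyv
      exact key H hHcl hHmax y (hKnH y hy) x hxH v hvH hxv hadj.symm hyv'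
    obtain ⟨a, ha, b, hb, hab⟩ := Finset.one_lt_card.mp
      (show 1 < (H.erase v).card by rw [Finset.card_erase_of_mem hvH]; omega)
    obtain ⟨c, hc, d, hd, hcd⟩ := Finset.one_lt_card.mp
      (show 1 < (K.erase v).card by rw [Finset.card_erase_of_mem hvK]; omega)
    have haH := (Finset.mem_erase.mp ha).2
    have hbH := (Finset.mem_erase.mp hb).2
    have hcK := (Finset.mem_erase.mp hc).2
    have hdK := (Finset.mem_erase.mp hd).2
    exact hgap ⟨a, b, c, d,
      hHcl (Finset.mem_coe.mpr haH) (Finset.mem_coe.mpr hbH) hab,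
      hKcl (Finset.mem_coe.mpr hcK) (Finset.mem_coe.mpr hdK) hcd,
      fun h => hKnH c hc (h ▸ haH), fun h => hKnH d hd (h ▸ haH),
      fun h => hKnH c hc (h ▸ hbH), fun h => hKnH d hd (h ▸ hbH),
      hna a ha c hc, hna a ha d hd, hna b hb c hc, hna b hb d hd⟩
  · -- disjoint case: two matching cross edges give a C4
    push_neg at hv
    have hemp : ∀ z, z ∈ H → z ∈ K → False := by
      intro z h1 h2
      exact hv z (Finset.mem_inter.mpr ⟨h1, h2⟩)
    have cross : ∀ (A B : Finset V), A ⊆ H → B ⊆ K → 2 ≤ A.card → 2 ≤ B.card →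
        ∃ x ∈ A, ∃ y ∈ B, G.Adj x y := by
      intro A B hA hB h2A h2B
      by_contra hno
      push_neg at hno
      obtain ⟨a, ha, b, hb, hab⟩ := Finset.one_lt_card.mp h2A
      obtain ⟨c, hc, d, hd, hcd⟩ := Finset.one_lt_card.mp h2B
      exact hgap ⟨a, b, c, d,
        hHcl (Finset.mem_coe.mpr (hA ha)) (Finset.mem_coe.mpr (hA hb)) hab,
        hKcl (Finset.mem_coe.mpr (hB hc)) (Finset.mem_coe.mpr (hB hd)) hcd,
        fun h => hemp a (hA ha) (h ▸ hB hc), fun h => hemp a (hA ha) (h ▸ hB hd),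
        fun h => hemp b (hA hb) (h ▸ hB hc), fun h => hemp b (hA hb) (h ▸ hB hd),
        hno a ha c hc, hno a ha d hd, hno b hb c hc, hno b hb d hd⟩
    obtain ⟨x₁, hx₁, y₁, hy₁, hadj₁⟩ := cross H K subset_rfl subset_rfl
      (by omega) (by omega)
    obtain ⟨x₂, hx₂, y₂, hy₂, hadj₂⟩ := cross (H.erase x₁) (K.erase y₁)
      (Finset.erase_subset _ _) (Finset.erase_subset _ _)
      (by rw [Finset.card_erase_of_mem hx₁]; omega)
      (by rw [Finset.card_erase_of_mem hy₁]; omega)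
    obtain ⟨hx₂x₁, hx₂H⟩ := Finset.mem_erase.mp hx₂
    obtain ⟨hy₂y₁, hy₂K⟩ := Finset.mem_erase.mp hy₂
    exact hc4 ⟨x₁, x₂, y₂, y₁,
      fun h => hemp x₁ hx₁ (h ▸ hy₂K),
      fun h => hemp x₂ hx₂H (h ▸ hy₁),
      hHcl (Finset.mem_coe.mpr hx₁) (Finset.mem_coe.mpr hx₂H) (Ne.symm hx₂x₁),
      hadj₂,
      hKcl (Finset.mem_coe.mpr hy₂K) (Finset.mem_coe.mpr hy₁) hy₂y₁,
      hadj₁.symm,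
      fun h => key K hKcl hKmax x₁ (fun hx => hemp x₁ hx₁ hx) y₁ hy₁ y₂ hy₂K
        (Ne.symm hy₂y₁) hadj₁ h,
      fun h => key H hHcl hHmax y₁ (fun hy => hemp y₁ hy hy₁) x₁ hx₁ x₂ hx₂H
        (Ne.symm hx₂x₁) hadj₁.symm h.symm⟩
end

section
/- For n ≥ 3, the LCM lattice of the edge ideal of the cycle graph C_n is complemented: for every subset Y of vertices that is a union of edges of C_n, the set T = ∪_{i ∉ Y} {i, i+1} (indices mod n) is a union of edges with T ∪ Y equal to all vertices and T ∩ Y containing no edge of C_n. -/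
/-- Adjacency in the cycle graph `C_n` with vertex set `ZMod n`: `i` is adjacent to
`i + 1`. -/
def CycleAdj (n : ℕ) (i j : ZMod n) : Prop :=
  i ≠ j ∧ (j = i + 1 ∨ i = j + 1)

/-- The LCM lattice of the edge ideal of the cycle `C_n` is complemented: for every
union-of-edges set `Y`, the set `T = ⋃_{i ∉ Y} {i, i+1}` is a union of edges,
`T ∪ Y` is everything, and `T ∩ Y` contains no edge of `C_n` (so `T` is a complement
of `Y`). -/
theorem cycle_lcm_lattice_complemented (n : ℕ) (hn : 3 ≤ n)
    (Y : Finset (ZMod n)) (hY : ∀ v ∈ Y, ∃ w ∈ Y, CycleAdj n v w)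
    (T : Finset (ZMod n))
    (hT : ∀ v : ZMod n, v ∈ T ↔ ∃ i : ZMod n, i ∉ Y ∧ (v = i ∨ v = i + 1)) :
    (∀ v ∈ T, ∃ w ∈ T, CycleAdj n v w) ∧
    (∀ v : ZMod n, v ∈ T ∨ v ∈ Y) ∧
    (∀ v w : ZMod n, v ∈ T → v ∈ Y → w ∈ T → w ∈ Y → ¬ CycleAdj n v w) := by

  have h1 : (1 : ZMod n) ≠ 0 := by
    haveI : NeZero n := ⟨by omega⟩
    haveI : Fact (1 < n) := ⟨by omega⟩
    exact one_ne_zero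
  have hne : ∀ i : ZMod n, i ≠ i + 1 := by
    intro i h
    apply h1
    have := congrArg (· - i) h
    simpa using this.symm
  refine ⟨?_, ?_, ?_⟩
  · intro v hv
    obtain ⟨i, hi, hv'⟩ := (hT v).1 hv
    rcases hv' with rfl | rfl
    · exact ⟨v + 1, (hT _).2 ⟨v, hi, Or.inr rfl⟩, hne v, Or.inl rfl⟩
    · exact ⟨i, (hT _).2 ⟨i, hi, Or.inl rfl⟩, (hne i).symm, Or.inr rfl⟩
  · intro v
    by_cases hv : v ∈ Y
    · exact Or.inr hv
    · exact Or.inl ((hT v).2 ⟨v, hv, Or.inl rfl⟩)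
  · rintro v w hvT hvY hwT hwY ⟨-, hadj⟩
    obtain ⟨i, hi, hvi⟩ := (hT v).1 hvT
    obtain ⟨j, hj, hwj⟩ := (hT w).1 hwT
    have hvi' : v = i + 1 := by rcases hvi with rfl | h; exact absurd hvY hi; exact h
    have hwj' : w = j + 1 := by rcases hwj with rfl | h; exact absurd hwY hj; exact h
    rcases hadj with h | h
    · apply hj
      have : j = v := by
        have := hwj'.symm.trans h
        exact add_right_cancel (by rw [hvi'] at this ⊢; linear_combination this)
      rwa [this]
    · apply hi
      have : i = w := by
        have := hvi'.symm.trans h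
        exact add_right_cancel (by rw [hwj'] at this ⊢; linear_combination this)
      rwa [this]
end

section
/- For the path graph P_n with n ≡ 1 (mod 3) and n > 1, the LCM lattice of the edge ideal I(P_n) is not complemented: the union-of-edges set Y = {i ∈ [n] : i ≡ 0 or 2 (mod 3)} has no complement. -/
/-- Adjacency in the path graph `P_n` on vertices `Fin n` (`0`-indexed; the paper's
vertex `i ∈ [n]` corresponds to `i - 1 : Fin n`): `j` is adjacent to `j + 1`. -/
def PathAdj (n : ℕ) (j k : Fin n) : Prop :=
  (j : ℕ) + 1 = (k : ℕ) ∨ (k : ℕ) + 1 = (j : ℕ)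

/-- For `n ≡ 1 (mod 3)`, `n > 1`, the LCM lattice of `I(P_n)` is not complemented:
the union-of-edges set `Y = {i ∈ [n] : i ≡ 0 or 2 (mod 3)}` (in `0`-indexed form,
`Y = {k : k % 3 ≠ 0}`) has no complement `C`, i.e. there is no union-of-edges set `C`
with `C ∪ Y = [n]` and `C ∩ Y` containing no edge of `P_n`. -/
theorem path_lcm_lattice_not_complemented (n : ℕ) (h1 : 1 < n) (h3 : n % 3 = 1)
    (Y : Finset (Fin n)) (hY : ∀ k : Fin n, k ∈ Y ↔ (k : ℕ) % 3 ≠ 0) :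
    (∀ v ∈ Y, ∃ w ∈ Y, PathAdj n v w) ∧
    ¬ ∃ C : Finset (Fin n),
        (∀ v ∈ C, ∃ w ∈ C, PathAdj n v w) ∧
        (∀ v : Fin n, v ∈ C ∨ v ∈ Y) ∧
        (∀ v w : Fin n, v ∈ C → v ∈ Y → w ∈ C → w ∈ Y → ¬ PathAdj n v w) := by
  constructor
  · intro v hv
    rw [hY] at hv
    have hvlt := v.isLt
    rcases (by omega : (v : ℕ) % 3 = 1 ∨ (v : ℕ) % 3 = 2) with h | h
    · have hlt : (v : ℕ) + 1 < n := by omega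
      refine ⟨⟨(v : ℕ) + 1, hlt⟩, ?_, Or.inl rfl⟩
      rw [hY]; simp only [Fin.val_mk]; omega
    · have hge : 2 ≤ (v : ℕ) := by omega
      refine ⟨⟨(v : ℕ) - 1, by omega⟩, ?_, Or.inr (by simp only [Fin.val_mk]; omega)⟩
      rw [hY]; simp only [Fin.val_mk]; omega
  · rintro ⟨C, hCC, hcov, hsep⟩
    have hYnot : ∀ v : Fin n, (v : ℕ) % 3 = 0 → v ∈ C := by
      intro v hv
      rcases hcov v with h | h
      · exact h
      · rw [hY] at h; exact absurd hv h
    have key : ∀ m : ℕ, ∀ hm : 3 * m + 1 < n,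
        (⟨3 * m + 1, hm⟩ : Fin n) ∈ C ∧
          ∀ hm2 : 3 * m + 2 < n, (⟨3 * m + 2, hm2⟩ : Fin n) ∉ C := by
      intro m
      induction m with
      | zero =>
        intro hm
        have h0 : (⟨0, by omega⟩ : Fin n) ∈ C := hYnot _ (by simp)
        obtain ⟨w, hwC, hadj⟩ := hCC _ h0
        have hw : (w : ℕ) = 1 := by
          rcases hadj with h | h <;> simp only [Fin.val_mk] at h <;> omega
        have hw1 : w = ⟨3 * 0 + 1, hm⟩ := Fin.ext (by simp only [Fin.val_mk]; omega)
        rw [hw1] at hwC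
        refine ⟨hwC, ?_⟩
        intro hm2 hmem
        exact hsep _ _ hwC (by rw [hY]; simp only [Fin.val_mk]; omega)
          hmem (by rw [hY]; simp only [Fin.val_mk]; omega)
          (Or.inl (by simp only [Fin.val_mk]))
      | succ m ih =>
        intro hm
        obtain ⟨ih1, ih2⟩ := ih (by omega)
        have h0 : (⟨3 * m + 3, by omega⟩ : Fin n) ∈ C := hYnot _ (by simp only [Fin.val_mk]; omega)
        obtain ⟨w, hwC, hadj⟩ := hCC _ h0
        have hw : (w : ℕ) = 3 * m + 4 := by
          rcases hadj with h | h
          · simp only [Fin.val_mk] at h; omega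
          · simp only [Fin.val_mk] at h
            exfalso
            have : w = (⟨3 * m + 2, by omega⟩ : Fin n) := Fin.ext (by simp only [Fin.val_mk]; omega)
            exact ih2 (by omega) (this ▸ hwC)
        have hw1 : w = ⟨3 * (m + 1) + 1, hm⟩ := Fin.ext (by simp only [Fin.val_mk]; omega)
        rw [hw1] at hwC
        refine ⟨hwC, ?_⟩
        intro hm2 hmem
        exact hsep _ _ hwC (by rw [hY]; simp only [Fin.val_mk]; omega)
          hmem (by rw [hY]; simp only [Fin.val_mk]; omega)
          (Or.inl (by simp only [Fin.val_mk]; try omega))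
    obtain ⟨M, hM⟩ : ∃ M, n = 3 * M + 1 := ⟨n / 3, by omega⟩
    have hM1 : 1 ≤ M := by omega
    have hlast : (⟨n - 1, by omega⟩ : Fin n) ∈ C := hYnot _ (by simp only [Fin.val_mk]; omega)
    obtain ⟨w, hwC, hadj⟩ := hCC _ hlast
    have hwlt := w.isLt
    have hw : (w : ℕ) = n - 2 := by
      rcases hadj with h | h <;> simp only [Fin.val_mk] at h <;> omega
    obtain ⟨-, k2⟩ := key (M - 1) (by omega)
    have : w = (⟨3 * (M - 1) + 2, by omega⟩ : Fin n) := Fin.ext (by simp only [Fin.val_mk]; omega)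
    exact k2 (by omega) (this ▸ hwC)
end
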